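/- arXiv:1806.11280 — 3 statements merged into one kernel-verified Lean document; each statement's English description precedes it below -/
import Mathlib

section
/- Let r, a, b be positive integers and let x_1 < x_2 < ... < x_r be integers all greater than 1. If ∏_{j=1}^{r} (1 - 1/x_j) ≤ a/b < ∏_{j=1}^{r-1} (1 - 1/x_j), then a · ∏_{j=1}^{r} x_j ≤ (a+1)^{2^r} - (a+1)^{2^{r-1}}. -/
set_option maxHeartbeats 1600000




lemma pow2_split (c s : ℕ) : c^(2^(s+1)) = c^(2^s) * c^(2^s) := by
  rw [← pow_add]; congr 1; omega

lemma pow2_pow (c m k : ℕ) : (c^(2^m))^(2^k) = c^(2^(m+k)) := by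
  rw [← pow_mul, ← pow_add]

lemma sq_as_pow2 (c k : ℕ) : (c^2)^(2^k) = c^(2^(k+1)) := by
  rw [← pow_mul]; congr 1; omega

lemma lift_lemma (Q t c m : ℕ) (ht : 1 ≤ t) (htc : t ≤ c) (h : Q + t^m ≤ (t^m)^2) :
    Q + c^m ≤ (c^m)^2 := by
  have h1 : t^m ≤ c^m := Nat.pow_le_pow_left htc m
  have h2 : 1 ≤ t^m := Nat.one_le_pow _ _ ht
  nlinarith [h, h1, h2]

lemma a5 (a B : ℕ) (ha : 2 ≤ a) (hB : B ≤ 2*a+1) : 4*a*B^4 ≤ (a+1)^8 := by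
  have h1 : B^4 ≤ (2*a+1)^4 := Nat.pow_le_pow_left hB 4
  have h2 : 4*a*(2*a+1)^4 ≤ (a+1)^8 := by
    zify
    nlinarith [mul_nonneg (mul_nonneg (mul_nonneg (sq_nonneg (a:ℤ)) (by linarith : (0:ℤ) ≤ 3*(a:ℤ)+2)) (by linarith : (0:ℤ) ≤ (a:ℤ)-2)) (by positivity : (0:ℤ) ≤ ((a:ℤ)+1)^2), pow_pos (by positivity : (0:ℤ) < (a:ℤ)+1) 8, sq_nonneg ((a:ℤ)-2)]
  calc 4*a*B^4 = 4*a*B^4 := rfl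
    _ ≤ 4*a*(2*a+1)^4 := Nat.mul_le_mul_left _ h1
    _ ≤ (a+1)^8 := h2

lemma jn (a B : ℕ) (ha : 2 ≤ a) (hB : B ≤ 2*a+1) :
    ∀ u : ℕ, 2*a*(u+2)*B^(2^(u+2)) ≤ (a+1)^(2^(u+3)) := by
  intro u
  induction u with
  | zero =>
    have e : 2*a*(0+2)*B^(2^2) = 4*a*B^4 := by ring_nf
    rw [e]
    calc 4*a*B^4 ≤ (a+1)^8 := a5 a B ha hB
      _ = (a+1)^(2^(0+3)) := by norm_num
  | succ u IH =>
    have hsq : (2*a*(u+2)*B^(2^(u+2))) * (2*a*(u+2)*B^(2^(u+2))) ≤ (a+1)^(2^(u+3)) * (a+1)^(2^(u+3)) :=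
      Nat.mul_le_mul IH IH
    have e1 : (a+1)^(2^(u+3)) * (a+1)^(2^(u+3)) = (a+1)^(2^(u+4)) := (pow2_split _ _).symm
    have e2 : B^(2^(u+2)) * B^(2^(u+2)) = B^(2^(u+3)) := (pow2_split _ _).symm
    have hcoef : 2*a*(u+3) ≤ 2*a*(u+2) * (2*a*(u+2)) := by
      have h1 : 2*a*(u+3) ≤ 2*a*(u+2) * 4 := by nlinarith [Nat.zero_le u]
      have h2 : 4 ≤ 2*a*(u+2) := by nlinarith [Nat.zero_le u]
      calc 2*a*(u+3) ≤ 2*a*(u+2) * 4 := h1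
        _ ≤ 2*a*(u+2) * (2*a*(u+2)) := Nat.mul_le_mul_left _ h2
    have key : 2*a*(u+3)*B^(2^(u+3)) ≤ (2*a*(u+2)*B^(2^(u+2))) * (2*a*(u+2)*B^(2^(u+2))) := by
      have e3 : (2*a*(u+2)*B^(2^(u+2))) * (2*a*(u+2)*B^(2^(u+2))) = 2*a*(u+2)*(2*a*(u+2)) * (B^(2^(u+2)) * B^(2^(u+2))) := by ring
      rw [e3, e2]
      exact Nat.mul_le_mul_right _ hcoef
    calc 2*a*(u+1+2)*B^(2^(u+1+2)) = 2*a*(u+3)*B^(2^(u+3)) := by norm_num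
      _ ≤ _ := key
      _ ≤ (a+1)^(2^(u+3)) * (a+1)^(2^(u+3)) := hsq
      _ = (a+1)^(2^(u+4)) := e1
      _ = (a+1)^(2^(u+1+3)) := by norm_num

lemma a7 : ∀ t : ℕ, (t+1)*((3^(2^t))*(3^(2^t))) + 4^(2^t) ≤ (4^(2^t))*(4^(2^t)) + (t+1)*3^(2^t) := by
  intro t
  induction t with
  | zero => norm_num
  | succ t IH =>
    rcases Nat.eq_zero_or_pos t with ht0 | htpos
    · subst ht0; norm_num
    · have e3 : (3:ℕ)^(2^(t+1)) = 3^(2^t) * 3^(2^t) := pow2_split 3 t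
      have e4 : (4:ℕ)^(2^(t+1)) = 4^(2^t) * 4^(2^t) := pow2_split 4 t
      rw [e3, e4]
      set p := (3:ℕ)^(2^t) with hp
      set q := (4:ℕ)^(2^t) with hq
      have hp9 : 9 ≤ p := by
        rw [hp]
        calc (9:ℕ) = 3^2 := by norm_num
          _ ≤ 3^(2^t) := Nat.pow_le_pow_right (by norm_num) (by
            calc 2 = 2^1 := by norm_num
              _ ≤ 2^t := Nat.pow_le_pow_right (by norm_num) htpos)
      have hpq : p ≤ q := Nat.pow_le_pow_left (by norm_num) _
      have ht1 : 1 ≤ t := htpos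
      have hq4n : (4:ℕ) ≤ q := le_trans (by norm_num : (4:ℕ) ≤ 9) (le_trans hp9 hpq)
      zify at IH ⊢
      have htz : (1:ℤ) ≤ (t:ℤ) := by exact_mod_cast ht1
      set s : ℤ := (t:ℤ)+1 with hs
      have hs2 : (2:ℤ) ≤ s := by omega
      have hp9' : (9:ℤ) ≤ (p:ℤ) := by exact_mod_cast hp9
      have hq4 : (4:ℤ) ≤ (q:ℤ) := by exact_mod_cast hq4n
      have hIH' : s*(p:ℤ)*((p:ℤ)-1) ≤ (q:ℤ)*((q:ℤ)-1) := by nlinarith [IH]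
      have hnn : (0:ℤ) ≤ s*(p:ℤ)*((p:ℤ)-1) :=
        mul_nonneg (mul_nonneg (by linarith) (by linarith)) (by linarith)
      have hsqIH : (s*(p:ℤ)*((p:ℤ)-1))^2 ≤ ((q:ℤ)*((q:ℤ)-1))^2 := by
        nlinarith [mul_self_le_mul_self hnn hIH']
      have hlast : (s+1)*((p:ℤ)+1) ≤ s^2*((p:ℤ)-1) := by
        nlinarith [mul_nonneg (by linarith : (0:ℤ) ≤ (p:ℤ)-9) (by nlinarith : (0:ℤ) ≤ s^2-s-1), sq_nonneg (s-2)]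
      have hstep : (s+1)*(p:ℤ)^2*((p:ℤ)^2-1) ≤ (s*(p:ℤ)*((p:ℤ)-1))^2 := by
        nlinarith [mul_nonneg (mul_nonneg (by positivity : (0:ℤ) ≤ (p:ℤ)^2) (by linarith : (0:ℤ) ≤ (p:ℤ)-1)) (by linarith [hlast] : (0:ℤ) ≤ s^2*((p:ℤ)-1) - (s+1)*((p:ℤ)+1))]
      have hlast2 : ((q:ℤ)*((q:ℤ)-1))^2 ≤ (q:ℤ)^2*((q:ℤ)^2-1) := by nlinarith [hq4]
      nlinarith [hstep, hsqIH, hlast2]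




lemma hB_lb (a z B : ℕ) (ha : 1 ≤ a) (hz : 2 ≤ z) (hBl : (a+1)*(a+z) ≤ z*B) : a+2 ≤ B := by
  by_contra h
  push_neg at h
  have h2 : z*B ≤ z*(a+1) := Nat.mul_le_mul_left _ (by omega)
  nlinarith

lemma hB_ub (a z B : ℕ) (ha : 1 ≤ a) (hz : 2 ≤ z) (hBu : z*B + 1 ≤ (a+1)*(a+z) + z) :
    B ≤ (a+1)^2 := by
  by_contra h
  push_neg at h
  have h2 : z*((a+1)^2+1) ≤ z*B := Nat.mul_le_mul_left _ (by omega)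
  zify at h2 hBu ⊢
  nlinarith [mul_nonneg (by linarith : (0:ℤ) ≤ (z:ℤ)-1) (by positivity : (0:ℤ) ≤ (a:ℤ)*(a:ℤ)+(a:ℤ))]

lemma z_le_a (a z B x0 : ℕ) (hz : 2 ≤ z) (hx0 : x0 = a+1+z)
    (hBu : z*B + 1 ≤ (a+1)*(a+z) + z) (hfr : x0 + 1 ≤ B) : z ≤ a := by
  have h2 : z*(x0+1) ≤ z*B := Nat.mul_le_mul_left _ hfr
  subst hx0
  by_contra h
  push_neg at h
  nlinarith

lemma nl1core (a z B x0 : ℕ) (ha : 2 ≤ a) (hz : 2 ≤ z) (hza : z ≤ a) (hx0 : x0 = a+1+z)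
    (hBu : z*B + 1 ≤ (a+1)*(a+z) + z) : x0*B ≤ (a+1)^2*(a+2) := by
  have hpoly : (a+1+z)*((a+1)*(a+z)+z) ≤ z*((a+1)^2*(a+2)) + (a+1+z) := by
    zify
    nlinarith [mul_nonneg (by linarith : (0:ℤ) ≤ (z:ℤ)-2) (by linarith : (0:ℤ) ≤ (a:ℤ)-(z:ℤ)),
      mul_nonneg (by linarith : (0:ℤ) ≤ (a:ℤ)-2) (by nlinarith : (0:ℤ) ≤ (a:ℤ)*(a:ℤ)+(a:ℤ)),
      mul_nonneg (mul_nonneg (by linarith : (0:ℤ) ≤ (z:ℤ)-2) (by linarith : (0:ℤ) ≤ (a:ℤ)-(z:ℤ))) (by linarith : (0:ℤ) ≤ (a:ℤ)+2)]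
  have h1 : x0*(z*B+1) ≤ x0*((a+1)*(a+z)+z) := Nat.mul_le_mul_left _ hBu
  have h2 : z*(x0*B) + x0 ≤ z*((a+1)^2*(a+2)) + x0 := by
    calc z*(x0*B) + x0 = x0*(z*B+1) := by ring
      _ ≤ x0*((a+1)*(a+z)+z) := h1
      _ = (a+1+z)*((a+1)*(a+z)+z) := by rw [hx0]
      _ ≤ z*((a+1)^2*(a+2)) + (a+1+z) := hpoly
      _ = z*((a+1)^2*(a+2)) + x0 := by rw [hx0]
  have h3 : z*(x0*B) ≤ z*((a+1)^2*(a+2)) := by linarith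
  exact Nat.le_of_mul_le_mul_left h3 (by omega)

lemma twoB (a z B : ℕ) (ha : 2 ≤ a) (hz : 2 ≤ z) (hza : z ≤ a)
    (hBu : z*B + 1 ≤ (a+1)*(a+z) + z) : 2*B ≤ (a+1)*(a+2) := by
  rcases Nat.eq_or_lt_of_le hz with h2 | h3
  · -- z = 2
    obtain ⟨k, hk⟩ : Even ((a+1)*(a+2)) := Nat.even_mul_succ_self (a+1)
    subst h2
    omega
  · -- z ≥ 3
    have hz3 : 3 ≤ z := h3
    have key : 2*((a+1)*(a+z)+z) ≤ z*((a+1)*(a+2)) + 2 := by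
      zify
      nlinarith [mul_nonneg (by linarith : (0:ℤ) ≤ (z:ℤ)-2) (by nlinarith : (0:ℤ) ≤ (a:ℤ)*(a:ℤ)+(a:ℤ)-6)]
    have h1 : 2*(z*B+1) ≤ 2*((a+1)*(a+z)+z) := Nat.mul_le_mul_left _ hBu
    have : z*(2*B) + 2 ≤ z*((a+1)*(a+2)) + 2 := by
      calc z*(2*B) + 2 = 2*(z*B+1) := by ring
        _ ≤ 2*((a+1)*(a+z)+z) := h1
        _ ≤ z*((a+1)*(a+2)) + 2 := key
    exact Nat.le_of_mul_le_mul_left (show z*(2*B) ≤ z*((a+1)*(a+2)) by linarith) (by omega)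

lemma a4 (a B : ℕ) (ha : 2 ≤ a) (hBlb : a+2 ≤ B) (h2B : 2*B ≤ (a+1)*(a+2)) :
    2*a*(a+2)*B^3 + (a+1)^6 ≤ B*(a+1)^6 := by
  have hC : a*(a+2)*(2*B)^3 + 2*2*(a+1)^6 ≤ 2*(2*B)*(a+1)^6 := by
    have h1 : 2*a+4 ≤ 2*B := by omega
    zify
    have e1 : (0:ℤ) ≤ ((a:ℤ)+1)^7 - 2*a*((a:ℤ)+2)^4 := by
      have h8 : (0:ℤ) ≤ ((a:ℤ)+1)^3 - 8*(a:ℤ) := by nlinarith [sq_nonneg ((a:ℤ)-1), (by linarith : (0:ℤ) ≤ (a:ℤ)-2)]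
      nlinarith [mul_nonneg (by nlinarith : (0:ℤ) ≤ (a:ℤ)^2-2) (by positivity : (0:ℤ) ≤ ((a:ℤ)+1)^2*((a:ℤ)+2)^2),
        mul_nonneg (by linarith : (0:ℤ) ≤ 8*(a:ℤ)) h8]
    have e2 : (0:ℤ) ≤ 2*((a:ℤ)+3)*((a:ℤ)+1)^3 - ((a:ℤ)+2)^4 := by
      nlinarith [mul_nonneg (by linarith : (0:ℤ) ≤ (a:ℤ)-2) (by positivity : (0:ℤ) ≤ (a:ℤ)^3), sq_nonneg ((a:ℤ)-2), pow_pos (by positivity : (0:ℤ) < (a:ℤ)) 3]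
    have hC1 : (0:ℤ) ≤ 2*(B:ℤ)-(2*a+4) := by push_cast; omega
    have hC2 : (0:ℤ) ≤ ((a:ℤ)+1)*((a:ℤ)+2) - 2*(B:ℤ) := by
      have : ((2*B : ℕ) : ℤ) ≤ (((a+1)*(a+2) : ℕ) : ℤ) := by exact_mod_cast h2B
      push_cast at this; linarith
    nlinarith [mul_nonneg (mul_nonneg hC1 hC2) (by positivity : (0:ℤ) ≤ 2*(B:ℤ)+(2*(a:ℤ)+4)+((a:ℤ)+1)*((a:ℤ)+2)),
      mul_nonneg hC2 e1, mul_nonneg hC1 e2,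
      mul_pos (by positivity : (0:ℤ) < (a:ℤ)) (by positivity : (0:ℤ) < ((a:ℤ)+2))]
  nlinarith [hC]

lemma master (a z B x0 : ℕ) (ha : 2 ≤ a) (hz : 2 ≤ z) (hx0 : x0 = a+1+z)
    (hBl : (a+1)*(a+z) ≤ z*B) (hBu : z*B + 1 ≤ (a+1)*(a+z) + z) :
    ∀ t : ℕ, x0 ≤ (t+2)*(B-1) → 2*a*x0*B^(2^(t+2)) ≤ (B-1)*(a+1)^(2^(t+3)) := by
  have hBlb : a+2 ≤ B := hB_lb a z B (by omega) hz hBl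
  have hBub : B ≤ (a+1)^2 := hB_ub a z B (by omega) hz hBu
  have hx0ge : a+3 ≤ x0 := by omega
  intro t
  induction t with
  | zero =>
    intro hroom
    by_cases hfr : x0 ≤ B - 1
    · -- dense: z ≤ a
      have hfr' : x0 + 1 ≤ B := by omega
      have hza : z ≤ a := z_le_a a z B x0 hz hx0 hBu hfr'
      have hcore : x0*B ≤ (a+1)^2*(a+2) := nl1core a z B x0 ha hz hza hx0 hBu
      have h2B : 2*B ≤ (a+1)*(a+2) := twoB a z B ha hz hza hBu
      have ha4 : 2*a*(a+2)*B^3 + (a+1)^6 ≤ B*(a+1)^6 := a4 a B ha hBlb h2B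
      have e1 : (2:ℕ)^(0+2) = 4 := by norm_num
      have e2 : (2:ℕ)^(0+3) = 8 := by norm_num
      rw [e1, e2]
      have key : 2*a*x0*B^4 ≤ 2*a*(a+2)*B^3*(a+1)^2 := by
        calc 2*a*x0*B^4 = 2*a*B^3*(x0*B) := by ring
          _ ≤ 2*a*B^3*((a+1)^2*(a+2)) := Nat.mul_le_mul_left _ hcore
          _ = 2*a*(a+2)*B^3*(a+1)^2 := by ring
      have key2 : 2*a*(a+2)*B^3*(a+1)^2 + (a+1)^8 ≤ B*(a+1)^8 := by
        have := Nat.mul_le_mul_right ((a+1)^2) ha4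
        calc 2*a*(a+2)*B^3*(a+1)^2 + (a+1)^8 = (2*a*(a+2)*B^3 + (a+1)^6)*(a+1)^2 := by ring
          _ ≤ B*(a+1)^6*(a+1)^2 := this
          _ = B*(a+1)^8 := by ring
      have hBpos : 1 ≤ B := by omega
      have : 2*a*x0*B^4 + (a+1)^8 ≤ B*(a+1)^8 := by linarith
      have hfin : B*(a+1)^8 = (B-1)*(a+1)^8 + (a+1)^8 := by
        have : B*(a+1)^8 = (B-1+1)*(a+1)^8 := by rw [Nat.sub_add_cancel hBpos]
        rw [this]; ring
      omega
    · -- fresh at 2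
      push_neg at hfr
      have hBle : B ≤ 2*a+1 := by
        by_contra hcon
        push_neg at hcon
        obtain ⟨c, hcB⟩ : ∃ c, B = a+2+c := ⟨B-(a+2), by omega⟩
        have hca : a ≤ c := by omega
        have hkey : z*(a+2+c)+1 ≤ (a+1)*(a+z)+z := hBu.trans_eq' (by rw [hcB])
        have hc1 : z*a ≤ z*c := Nat.mul_le_mul_left _ hca
        have hzlea : z ≤ a := by
          by_contra hzz
          push_neg at hzz
          have h2 : (a+1)*a ≤ z*a := Nat.mul_le_mul_right a (by omega)
          zify at hkey hc1 h2
          nlinarith [hkey, hc1, h2]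
        omega
      have hx2 : x0 ≤ 2*(B-1) := by omega
      have e2 : (2:ℕ)^(0+2) = 4 := by norm_num
      rw [e2]
      have h5 : 4*a*B^4 ≤ (a+1)^8 := a5 a B ha hBle
      calc 2*a*x0*B^4 ≤ 2*a*(2*(B-1))*B^4 := by
            have := Nat.mul_le_mul_right (B^4) (Nat.mul_le_mul_left (2*a) hx2)
            calc 2*a*x0*B^4 = 2*a*x0*B^4 := rfl
              _ ≤ 2*a*(2*(B-1))*B^4 := by
                  exact Nat.mul_le_mul_right _ (Nat.mul_le_mul_left _ hx2)
        _ = (B-1)*(4*a*B^4) := by ring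
        _ ≤ (B-1)*(a+1)^8 := Nat.mul_le_mul_left _ h5
        _ = (B-1)*(a+1)^(2^(0+3)) := by norm_num
  | succ t IH =>
    intro hroom
    by_cases hc : x0 ≤ (t+2)*(B-1)
    · have hIH := IH hc
      have hpow : B^(2^(t+2)) ≤ (a+1)^(2^(t+3)) := by
        calc B^(2^(t+2)) ≤ ((a+1)^2)^(2^(t+2)) := Nat.pow_le_pow_left hBub _
          _ = (a+1)^(2^(t+3)) := sq_as_pow2 (a+1) (t+2)
      calc 2*a*x0*B^(2^(t+1+2)) = (2*a*x0*B^(2^(t+2)))*B^(2^(t+2)) := by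
            rw [show t+1+2 = (t+2)+1 from by omega, pow2_split B (t+2)]; ring
        _ ≤ ((B-1)*(a+1)^(2^(t+3)))*(a+1)^(2^(t+3)) := Nat.mul_le_mul hIH hpow
        _ = (B-1)*((a+1)^(2^(t+3))*(a+1)^(2^(t+3))) := by ring
        _ = (B-1)*(a+1)^(2^(t+1+3)) := by
            rw [show t+1+3 = (t+3)+1 from by omega, pow2_split (a+1) (t+3)]
    · push_neg at hc
      -- fresh: (t+2)(B-1) < x0 ≤ (t+3)(B-1)
      have hzbig : a+2 ≤ z := by
        have h1 : 2*(B-1) ≤ (t+2)*(B-1) := Nat.mul_le_mul_right _ (by omega)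
        have h2 : 2*(a+1) ≤ 2*(B-1) := by omega
        omega
      have hBle : B ≤ 2*a+1 := by
        by_contra hcon
        push_neg at hcon
        obtain ⟨c, hcB⟩ : ∃ c, B = a+2+c := ⟨B-(a+2), by omega⟩
        have hca : a ≤ c := by omega
        have hc1 : z*a ≤ z*c := Nat.mul_le_mul_left _ hca
        have hc2 : (a+2)*a ≤ z*a := Nat.mul_le_mul_right _ hzbig
        have hkey : z*(a+2+c)+1 ≤ (a+1)*(a+z)+z := hBu.trans_eq' (by rw [hcB])
        zify at hkey hc1 hc2 ⊢
        have hz' : (2:ℤ) ≤ (z:ℤ) := by exact_mod_cast hz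
        have ha' : (2:ℤ) ≤ (a:ℤ) := by exact_mod_cast ha
        nlinarith [hkey, hc1, hc2]
      have hjn := jn a B ha hBle (t+1)
      have hroom' : x0 ≤ (t+3)*(B-1) := by
        have e : t+1+2 = t+3 := by omega
        rwa [e] at hroom
      calc 2*a*x0*B^(2^(t+1+2)) ≤ 2*a*((t+3)*(B-1))*B^(2^(t+1+2)) := by
            exact Nat.mul_le_mul_right _ (Nat.mul_le_mul_left _ hroom')
        _ = (B-1)*(2*a*(t+1+2)*B^(2^(t+1+2))) := by ring
        _ ≤ (B-1)*(a+1)^(2^(t+1+3)) := Nat.mul_le_mul_left _ hjn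

lemma nl (a z B x0 t : ℕ) (ha : 1 ≤ a) (hz : 2 ≤ z) (hx0 : x0 = a+1+z)
    (hBl : (a+1)*(a+z) ≤ z*B) (hBu : z*B + 1 ≤ (a+1)*(a+z) + z)
    (hroom : x0 ≤ (t+1)*(B-1)) :
    a*x0*B^(2^(t+1)) + (B-1)*(a+1)^(2^(t+1)) ≤ (B-1)*(a+1)^(2^(t+2)) + a*x0*B^(2^t) := by
  have hBlb : a+2 ≤ B := hB_lb a z B ha hz hBl
  rcases Nat.lt_or_ge a 2 with ha1 | ha2
  · -- a = 1
    have haeq : a = 1 := by omega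
    subst haeq
    have hB3 : B = 3 := by
      have hle : ¬ (B ≤ 2) := by omega
      by_contra hne
      have h4 : 4 ≤ B := by omega
      have : z*4 ≤ z*B := Nat.mul_le_mul_left _ h4
      nlinarith [hBu, this]
    subst hB3
    norm_num
    -- goal: x0*3^(2^(t+1)) + 2*2^(2^(t+1)) ≤ 2*2^(2^(t+2)) + x0*3^(2^t)
    have hroom' : x0 ≤ (t+1)*2 := by omega
    have e1 : (3:ℕ)^(2^(t+1)) = 3^(2^t)*3^(2^t) := pow2_split 3 t
    have e2 : (2:ℕ)^(2^(t+1)) = 4^(2^t) := by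
      rw [← sq_as_pow2 2 t]; norm_num
    have e3 : (2:ℕ)^(2^(t+2)) = 4^(2^t)*4^(2^t) := by
      rw [show t+2 = (t+1)+1 from rfl, ← sq_as_pow2 2 (t+1), show (2:ℕ)^2 = 4 from rfl, pow2_split 4 t]
    rw [e1, e2, e3]
    have h7 := a7 t
    set p := (3:ℕ)^(2^t)
    set q := (4:ℕ)^(2^t)
    have hp1 : 1 ≤ p := Nat.one_le_pow _ _ (by norm_num)
    have hppp : p ≤ p*p := Nat.le_mul_of_pos_left _ (by omega)
    zify at h7 hroom' hppp ⊢
    nlinarith [h7, hroom', mul_nonneg (by linarith : (0:ℤ) ≤ 2*((t:ℤ)+1)-(x0:ℤ)) (by linarith : (0:ℤ) ≤ (p:ℤ)*(p:ℤ)-(p:ℤ))]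
  · -- a ≥ 2
    rcases Nat.eq_zero_or_pos t with ht0 | htpos
    · -- t = 0, s = 1
      subst ht0
      have hfr : x0 + 1 ≤ B := by omega
      have hza : z ≤ a := z_le_a a z B x0 hz hx0 hBu hfr
      have hcore : x0*B ≤ (a+1)^2*(a+2) := nl1core a z B x0 ha2 hz hza hx0 hBu
      have key : a*(x0*B) + (a+1)^2 ≤ (a+1)^4 := by
        have h1 : a*(x0*B) ≤ a*((a+1)^2*(a+2)) := Nat.mul_le_mul_left _ hcore
        have h2 : a*((a+1)^2*(a+2)) + (a+1)^2 = (a+1)^4 := by ring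
        omega
      -- goal: a*x0*B^2 + (B-1)*(a+1)^2 ≤ (B-1)*(a+1)^4 + a*x0*B
      have hB1 : 1 ≤ B := by omega
      obtain ⟨W, hW⟩ : ∃ W, B = W+1 := ⟨B-1, by omega⟩
      subst hW
      simp only [Nat.add_sub_cancel]
      have hkw : W*(a*(x0*(W+1))) + W*((a+1)^2) ≤ W*((a+1)^4) := by
        have := Nat.mul_le_mul_left W key
        calc W*(a*(x0*(W+1))) + W*((a+1)^2) = W*(a*(x0*(W+1)) + (a+1)^2) := by ring
          _ ≤ W*((a+1)^4) := this
      calc a*x0*(W+1)^(2^(0+1)) + W*(a+1)^(2^(0+1))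
          = a*x0*((W+1)*(W+1)) + W*(a+1)^2 := by ring_nf
        _ ≤ W*(a+1)^4 + a*x0*(W+1) := by nlinarith [hkw]
        _ = W*(a+1)^(2^(0+2)) + a*x0*(W+1)^(2^0) := by ring_nf
    · -- t ≥ 1 : s = t+1 ≥ 2, use master with t' = t-1
      obtain ⟨t', rfl⟩ : ∃ t', t = t'+1 := ⟨t-1, by omega⟩
      have hM : 2*a*x0*B^(2^(t'+2)) ≤ (B-1)*(a+1)^(2^(t'+3)) :=
        master a z B x0 ha2 hz hx0 hBl hBu t' (by
          have e : t'+1+1 = t'+2 := by omega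
          rwa [e] at hroom)
      have hE2 : 2 ≤ (a+1)^(2^(t'+2)) := by
        calc 2 ≤ a+1 := by omega
          _ = (a+1)^1 := (pow_one _).symm
          _ ≤ (a+1)^(2^(t'+2)) := Nat.pow_le_pow_right (by omega) (Nat.one_le_two_pow)
      have esplit : (a+1)^(2^(t'+3)) = (a+1)^(2^(t'+2)) * (a+1)^(2^(t'+2)) := pow2_split (a+1) (t'+2)
      have goal2 : 2*(a*x0*B^(2^(t'+2)) + (B-1)*(a+1)^(2^(t'+2))) ≤ 2*((B-1)*((a+1)^(2^(t'+2))*(a+1)^(2^(t'+2)))) := by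
        have h1 : 2*(a*x0*B^(2^(t'+2))) ≤ (B-1)*((a+1)^(2^(t'+2))*(a+1)^(2^(t'+2))) := by
          calc 2*(a*x0*B^(2^(t'+2))) = 2*a*x0*B^(2^(t'+2)) := by ring
            _ ≤ (B-1)*(a+1)^(2^(t'+3)) := hM
            _ = (B-1)*((a+1)^(2^(t'+2))*(a+1)^(2^(t'+2))) := by rw [esplit]
        have h2 : 2*((B-1)*(a+1)^(2^(t'+2))) ≤ (B-1)*((a+1)^(2^(t'+2))*(a+1)^(2^(t'+2))) := by
          calc 2*((B-1)*(a+1)^(2^(t'+2))) = (B-1)*(2*(a+1)^(2^(t'+2))) := by ring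
            _ ≤ (B-1)*((a+1)^(2^(t'+2))*(a+1)^(2^(t'+2))) :=
                Nat.mul_le_mul_left _ (Nat.mul_le_mul_right _ hE2)
        calc 2*(a*x0*B^(2^(t'+2)) + (B-1)*(a+1)^(2^(t'+2)))
            = 2*(a*x0*B^(2^(t'+2))) + 2*((B-1)*(a+1)^(2^(t'+2))) := by ring
          _ ≤ (B-1)*((a+1)^(2^(t'+2))*(a+1)^(2^(t'+2))) + (B-1)*((a+1)^(2^(t'+2))*(a+1)^(2^(t'+2))) := Nat.add_le_add h1 h2
          _ = 2*((B-1)*((a+1)^(2^(t'+2))*(a+1)^(2^(t'+2)))) := by ring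
      have hmain : a*x0*B^(2^(t'+2)) + (B-1)*(a+1)^(2^(t'+2)) ≤ (B-1)*((a+1)^(2^(t'+2))*(a+1)^(2^(t'+2))) :=
        Nat.le_of_mul_le_mul_left goal2 (by omega)
      calc a*x0*B^(2^(t'+1+1)) + (B-1)*(a+1)^(2^(t'+1+1))
          = a*x0*B^(2^(t'+2)) + (B-1)*(a+1)^(2^(t'+2)) := by rw [show t'+1+1 = t'+2 from by omega]
        _ ≤ (B-1)*((a+1)^(2^(t'+2))*(a+1)^(2^(t'+2))) := hmain
        _ = (B-1)*(a+1)^(2^(t'+3)) := by rw [esplit]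
        _ = (B-1)*(a+1)^(2^(t'+1+2)) := by rw [show t'+1+2 = t'+3 from by omega]
        _ ≤ (B-1)*(a+1)^(2^(t'+1+2)) + a*x0*B^(2^(t'+1)) := Nat.le_add_right _ _




open Finset in
lemma xlow (x : ℕ → ℕ) (r : ℕ) (hmono : ∀ i j, i < j → j < r → x i < x j) :
    ∀ j, j < r → x 0 + j ≤ x j := by
  intro j
  induction j with
  | zero => intro _; omega
  | succ j ih =>
    intro hj
    have h1 := ih (by omega)
    have h2 := hmono j (j+1) (by omega) hj
    omega

open Finset in
lemma one_le_prod_aux (f : ℕ → ℕ) (m : ℕ) (h : ∀ j, j < m → 1 ≤ f j) :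
    1 ≤ ∏ j ∈ range m, f j := by
  induction m with
  | zero => simp
  | succ m ih =>
    rw [prod_range_succ]
    have h1 := ih (fun j hj => h j (by omega))
    have h2 := h m (by omega)
    exact Nat.one_le_iff_ne_zero.mpr (by positivity)

open Finset in
lemma prod_sub_le (x : ℕ → ℕ) (m : ℕ) :
    ∏ j ∈ range m, (x j - 1) ≤ ∏ j ∈ range m, x j :=
  Finset.prod_le_prod' (fun i _ => Nat.sub_le _ _)

open Finset in
lemma tele_lemma (x : ℕ → ℕ) (r : ℕ) (hx1 : ∀ j, j < r → 1 < x j)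
    (hmono : ∀ i j, i < j → j < r → x i < x j) :
    ∀ m, m + 1 ≤ r → x 0 * ∏ j ∈ range m, x (j+1) ≤ (x 0 + m) * ∏ j ∈ range m, (x (j+1) - 1) := by
  intro m
  induction m with
  | zero => simp
  | succ m ih =>
    intro hm
    have hih := ih (by omega)
    rw [prod_range_succ, prod_range_succ]
    have hxm : x 0 + (m+1) ≤ x (m+1) := xlow x r hmono (m+1) (by omega)
    have hstep : (x 0 + m) * x (m+1) ≤ (x 0 + (m+1)) * (x (m+1) - 1) := by
      have h2 : 1 < x (m+1) := hx1 (m+1) (by omega)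
      zify [show 1 ≤ x (m+1) from by omega]
      nlinarith [hxm]
    calc x 0 * ((∏ j ∈ range m, x (j+1)) * x (m+1)) = (x 0 * ∏ j ∈ range m, x (j+1)) * x (m+1) := by ring
      _ ≤ ((x 0 + m) * ∏ j ∈ range m, (x (j+1) - 1)) * x (m+1) := Nat.mul_le_mul_right _ hih
      _ = ((x 0 + m) * x (m+1)) * ∏ j ∈ range m, (x (j+1) - 1) := by ring
      _ ≤ ((x 0 + (m+1)) * (x (m+1) - 1)) * ∏ j ∈ range m, (x (j+1) - 1) := Nat.mul_le_mul_right _ hstep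
      _ = (x 0 + (m+1)) * ((∏ j ∈ range m, (x (j+1) - 1)) * (x (m+1) - 1)) := by ring

open Finset in
theorem core : ∀ (r : ℕ), 0 < r → ∀ (a b : ℕ) (x : ℕ → ℕ), 0 < a → 0 < b →
    (∀ j, j < r → 1 < x j) → (∀ i j, i < j → j < r → x i < x j) →
    (b * ∏ j ∈ range r, (x j - 1) ≤ a * ∏ j ∈ range r, x j) →
    (a * ∏ j ∈ range (r-1), x j < b * ∏ j ∈ range (r-1), (x j - 1)) →
    a * ∏ j ∈ range r, x j + (a+1)^(2^(r-1)) ≤ (a+1)^(2^r) := by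
  intro r
  induction r using Nat.strong_induction_on with
  | _ r IH =>
    intro hrpos a b x ha hb hx1 hmono h1 h2
    rcases Nat.lt_or_ge r 2 with hr1 | hr2
    · -- r = 1
      have hre : r = 1 := by omega
      subst hre
      simp only [prod_range_one, show (1:ℕ)-1 = 0 from rfl, prod_range_zero, mul_one] at h1 h2 ⊢
      have hab : a + 1 ≤ b := h2
      have hx0 : 2 ≤ x 0 := hx1 0 (by omega)
      obtain ⟨u, hu⟩ : ∃ u, x 0 = u + 2 := ⟨x 0 - 2, by omega⟩
      rw [hu] at h1 ⊢
      have hb1 : (a+1)*(u+1) ≤ b*(u+2-1) := by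
        simp only [show u+2-1 = u+1 from rfl]
        exact Nat.mul_le_mul_right _ hab
      simp only [show u+2-1 = u+1 from rfl] at h1
      have key : u + 1 ≤ a := by nlinarith [le_trans hb1 h1]
      have e1 : (2:ℕ)^(1-1) = 1 := by norm_num
      have e2 : (2:ℕ)^1 = 2 := by norm_num
      rw [e1, e2, pow_one]
      nlinarith [key]
    · -- r ≥ 2
      obtain ⟨k, rfl⟩ : ∃ k, r = k + 2 := ⟨r - 2, by omega⟩
      simp only [show k+2-1 = k+1 from rfl] at h2 ⊢
      have hx0ge2 : 2 ≤ x 0 := hx1 0 (by omega)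
      by_cases hA : x 0 ≤ a + 2
      · -- Case A : strip first element
        have h1' : (b*(x 0 - 1)) * ∏ j ∈ range (k+1), (x (j+1) - 1) ≤ (a * x 0) * ∏ j ∈ range (k+1), x (j+1) := by
          rw [prod_range_succ' (fun j => x j - 1) (k+1), prod_range_succ' x (k+1)] at h1
          calc (b*(x 0 - 1)) * ∏ j ∈ range (k+1), (x (j+1) - 1)
              = b * ((∏ j ∈ range (k+1), (x (j+1) - 1)) * (x 0 - 1)) := by ring
            _ ≤ a * ((∏ j ∈ range (k+1), x (j+1)) * x 0) := h1
            _ = (a * x 0) * ∏ j ∈ range (k+1), x (j+1) := by ring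
        have h2' : (a * x 0) * ∏ j ∈ range k, x (j+1) < (b*(x 0 - 1)) * ∏ j ∈ range k, (x (j+1) - 1) := by
          rw [prod_range_succ' (fun j => x j - 1) k, prod_range_succ' x k] at h2
          calc (a * x 0) * ∏ j ∈ range k, x (j+1)
              = a * ((∏ j ∈ range k, x (j+1)) * x 0) := by ring
            _ < b * ((∏ j ∈ range k, (x (j+1) - 1)) * (x 0 - 1)) := h2
            _ = (b*(x 0 - 1)) * ∏ j ∈ range k, (x (j+1) - 1) := by ring
        have hIH := IH (k+1) (by omega) (by omega) (a * x 0) (b * (x 0 - 1)) (fun j => x (j+1))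
          (by positivity) (Nat.mul_pos hb (by omega))
          (fun j hj => hx1 (j+1) (by omega))
          (fun i j hij hj => hmono (i+1) (j+1) (by omega) (by omega))
          h1' (by simpa using h2')
        simp only [Nat.add_sub_cancel] at hIH
        -- hIH : (a*x0) * ∏_{j<k+1} x (j+1) + (a*x0+1)^(2^k) ≤ (a*x0+1)^(2^(k+1))
        have hsq : (a*x 0+1)^(2^(k+1)) = ((a*x 0+1)^(2^k))^2 := by
          rw [pow_succ, pow_mul]
        rw [hsq] at hIH
        have hlift := lift_lemma ((a*x 0) * ∏ j ∈ range (k+1), x (j+1)) (a*x 0+1) ((a+1)^2) (2^k)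
          (by omega) (by nlinarith [hA, ha]) hIH
        have e1 : ((a+1)^2)^(2^k) = (a+1)^(2^(k+1)) := sq_as_pow2 (a+1) k
        rw [e1] at hlift
        have e2 : ((a+1)^(2^(k+1)))^2 = (a+1)^(2^(k+2)) := by
          rw [show (2:ℕ)^(k+2) = 2^(k+1)*2 from pow_succ 2 (k+1), pow_mul]
        rw [e2] at hlift
        have eprod : a * ∏ j ∈ range (k+2), x j = (a*x 0) * ∏ j ∈ range (k+1), x (j+1) := by
          rw [prod_range_succ' x (k+1)]; ring
        rw [eprod]
        exact hlift
      · push_neg at hA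
        by_cases hcross : ∃ m, (1 ≤ m ∧ (a+1) * ∏ j ∈ range m, (x j - 1) ≤ a * ∏ j ∈ range m, x j) ∧ m ≤ k+1
        · -- Case B : crossing split
          classical
          obtain ⟨mw, hmw, hmwk⟩ := hcross
          have hex : ∃ m, 1 ≤ m ∧ (a+1) * ∏ j ∈ range m, (x j - 1) ≤ a * ∏ j ∈ range m, x j := ⟨mw, hmw⟩
          set m0 := Nat.find hex with hm0def
          have hm0 := Nat.find_spec hex
          obtain ⟨hm01, hm0c⟩ := hm0
          have hm0le : m0 ≤ mw := Nat.find_min' hex hmw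
          have hm0k : m0 ≤ k+1 := le_trans hm0le hmwk
          have hpre2 : a * ∏ j ∈ range (m0-1), x j < (a+1) * ∏ j ∈ range (m0-1), (x j - 1) := by
            rcases Nat.eq_or_lt_of_le hm01 with h | h
            · have e : m0 - 1 = 0 := by omega
              rw [e]; simp
            · have hnot := Nat.find_min hex (show m0 - 1 < m0 from by omega)
              push_neg at hnot
              have := hnot (by omega)
              omega
          have hprefIH := IH m0 (by omega) (by omega) a (a+1) x ha (by omega)
            (fun j hj => hx1 j (by omega)) (fun i j hij hj => hmono i j hij (by omega)) hm0c hpre2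
          obtain ⟨l, hl⟩ : ∃ l, k+2 = m0 + (l+1) := ⟨k+1-m0, by omega⟩
          have hml : m0 + l = k + 1 := by omega
          have eX2 : ∏ j ∈ range (k+2), x j = (∏ j ∈ range m0, x j) * ∏ j ∈ range (l+1), x (m0+j) := by
            rw [hl]; exact Finset.prod_range_add x m0 (l+1)
          have eY2 : ∏ j ∈ range (k+2), (x j - 1) = (∏ j ∈ range m0, (x j - 1)) * ∏ j ∈ range (l+1), (x (m0+j) - 1) := by
            rw [hl]; exact Finset.prod_range_add (fun j => x j - 1) m0 (l+1)
          have eX1 : ∏ j ∈ range (k+1), x j = (∏ j ∈ range m0, x j) * ∏ j ∈ range l, x (m0+j) := by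
            rw [show k+1 = m0 + l from by omega]; exact Finset.prod_range_add x m0 l
          have eY1 : ∏ j ∈ range (k+1), (x j - 1) = (∏ j ∈ range m0, (x j - 1)) * ∏ j ∈ range l, (x (m0+j) - 1) := by
            rw [show k+1 = m0 + l from by omega]; exact Finset.prod_range_add (fun j => x j - 1) m0 l
          have h1'' : (b * ∏ j ∈ range m0, (x j - 1)) * ∏ j ∈ range (l+1), (x (m0+j) - 1) ≤
              (a * ∏ j ∈ range m0, x j) * ∏ j ∈ range (l+1), x (m0+j) := by
            rw [eX2, eY2] at h1
            calc (b * ∏ j ∈ range m0, (x j - 1)) * ∏ j ∈ range (l+1), (x (m0+j) - 1)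
                = b * ((∏ j ∈ range m0, (x j - 1)) * ∏ j ∈ range (l+1), (x (m0+j) - 1)) := by ring
              _ ≤ a * ((∏ j ∈ range m0, x j) * ∏ j ∈ range (l+1), x (m0+j)) := h1
              _ = (a * ∏ j ∈ range m0, x j) * ∏ j ∈ range (l+1), x (m0+j) := by ring
          have h2'' : (a * ∏ j ∈ range m0, x j) * ∏ j ∈ range l, x (m0+j) <
              (b * ∏ j ∈ range m0, (x j - 1)) * ∏ j ∈ range l, (x (m0+j) - 1) := by
            rw [eX1, eY1] at h2
            calc (a * ∏ j ∈ range m0, x j) * ∏ j ∈ range l, x (m0+j)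
                = a * ((∏ j ∈ range m0, x j) * ∏ j ∈ range l, x (m0+j)) := by ring
              _ < b * ((∏ j ∈ range m0, (x j - 1)) * ∏ j ∈ range l, (x (m0+j) - 1)) := h2
              _ = (b * ∏ j ∈ range m0, (x j - 1)) * ∏ j ∈ range l, (x (m0+j) - 1) := by ring
          have hXpos : 1 ≤ ∏ j ∈ range m0, x j :=
            one_le_prod_aux x m0 (fun j hj => by have := hx1 j (by omega); omega)
          have hYpos : 1 ≤ ∏ j ∈ range m0, (x j - 1) :=
            one_le_prod_aux _ m0 (fun j hj => by have := hx1 j (by omega); omega)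
          have htail := IH (l+1) (by omega) (by omega) (a * ∏ j ∈ range m0, x j)
            (b * ∏ j ∈ range m0, (x j - 1)) (fun j => x (m0+j))
            (Nat.mul_pos ha hXpos) (Nat.mul_pos hb hYpos)
            (fun j hj => hx1 (m0+j) (by omega))
            (fun i j hij hj => hmono (m0+i) (m0+j) (by omega) (by omega))
            h1'' (by simpa using h2'')
          simp only [Nat.add_sub_cancel] at htail
          have hu1 : a * ∏ j ∈ range m0, x j + 1 ≤ (a+1)^(2^m0) := by
            have hone : 1 ≤ (a+1)^(2^(m0-1)) := Nat.one_le_pow _ _ (by omega)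
            omega
          have hsq : (a * ∏ j ∈ range m0, x j + 1)^(2^(l+1)) = ((a * ∏ j ∈ range m0, x j + 1)^(2^l))^2 := by
            rw [pow_succ, pow_mul]
          rw [hsq] at htail
          have hlift := lift_lemma ((a * ∏ j ∈ range m0, x j) * ∏ j ∈ range (l+1), x (m0+j))
            (a * ∏ j ∈ range m0, x j + 1) ((a+1)^(2^m0)) (2^l) (by omega) hu1 htail
          have e1 : ((a+1)^(2^m0))^(2^l) = (a+1)^(2^(k+1)) := by
            rw [pow2_pow, hml]
          rw [e1] at hlift
          have e2 : ((a+1)^(2^(k+1)))^2 = (a+1)^(2^(k+2)) := by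
            rw [show (2:ℕ)^(k+2) = 2^(k+1)*2 from pow_succ 2 (k+1), pow_mul]
          rw [e2] at hlift
          have eprod : a * ∏ j ∈ range (k+2), x j = (a * ∏ j ∈ range m0, x j) * ∏ j ∈ range (l+1), x (m0+j) := by
            rw [eX2]; ring
          rw [eprod]
          exact hlift
        · -- Case C : core-hard
          push_neg at hcross
          have hnc : ∀ m, 1 ≤ m → m ≤ k+1 → a * ∏ j ∈ range m, x j < (a+1) * ∏ j ∈ range m, (x j - 1) := by
            intro m hm1 hmk
            by_contra hcon
            push_neg at hcon
            exact absurd hmk (by exact Nat.not_le.mpr (hcross m ⟨hm1, hcon⟩))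
          -- b = a + 1
          have hXk1pos : 1 ≤ ∏ j ∈ range (k+1), x j :=
            one_le_prod_aux x (k+1) (fun j hj => by have := hx1 j (by omega); omega)
          have hba : a < b := by
            have hy := prod_sub_le x (k+1)
            have : a * ∏ j ∈ range (k+1), x j < b * ∏ j ∈ range (k+1), x j :=
              lt_of_lt_of_le h2 (Nat.mul_le_mul_left _ hy)
            exact Nat.lt_of_mul_lt_mul_right this
          have hble : b ≤ a+1 := by
            by_contra hcon
            push_neg at hcon
            have hb2 : a+2 ≤ b := hcon
            have hw : a+2 ≤ x (k+1) := by
              have := hmono 0 (k+1) (by omega) (by omega)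
              omega
            have hlast := hnc (k+1) (by omega) (le_refl _)
            have hw1 : 1 ≤ x (k+1) := by omega
            have eX : ∏ j ∈ range (k+2), x j = (∏ j ∈ range (k+1), x j) * x (k+1) := prod_range_succ x (k+1)
            have eY : ∏ j ∈ range (k+2), (x j - 1) = (∏ j ∈ range (k+1), (x j - 1)) * (x (k+1) - 1) :=
              prod_range_succ (fun j => x j - 1) (k+1)
            have hscal : (a+1) * x (k+1) ≤ (a+2) * (x (k+1) - 1) := by
              zify [hw1]
              nlinarith [hw]
            have hchain : a * ∏ j ∈ range (k+2), x j < b * ∏ j ∈ range (k+2), (x j - 1) := by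
              rw [eX, eY]
              calc a * ((∏ j ∈ range (k+1), x j) * x (k+1))
                  = (a * ∏ j ∈ range (k+1), x j) * x (k+1) := by ring
                _ < ((a+1) * ∏ j ∈ range (k+1), (x j - 1)) * x (k+1) := by
                    exact (Nat.mul_lt_mul_right (show 0 < x (k+1) from by omega)).mpr hlast
                _ = (∏ j ∈ range (k+1), (x j - 1)) * ((a+1) * x (k+1)) := by ring
                _ ≤ (∏ j ∈ range (k+1), (x j - 1)) * ((a+2) * (x (k+1) - 1)) :=
                    Nat.mul_le_mul_left _ hscal
                _ = (a+2) * ((∏ j ∈ range (k+1), (x j - 1)) * (x (k+1) - 1)) := by ring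
                _ ≤ b * ((∏ j ∈ range (k+1), (x j - 1)) * (x (k+1) - 1)) := by
                    exact Nat.mul_le_mul_right _ hb2
            exact absurd h1 (by omega)
          have hbeq : b = a+1 := by omega
          subst hbeq
          -- set up z and B
          obtain ⟨z, hzx⟩ : ∃ z, x 0 = a+1+z := ⟨x 0 - (a+1), by omega⟩
          have hz2 : 2 ≤ z := by omega
          have hx0m1 : x 0 - 1 = a + z := by omega
          obtain ⟨B, hBl, hBu⟩ : ∃ B, (a+1)*(a+z) ≤ z*B ∧ z*B + 1 ≤ (a+1)*(a+z) + z := by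
            refine ⟨((a+1)*(a+z) + (z-1))/z, ?_, ?_⟩
            · have hdm := Nat.div_add_mod ((a+1)*(a+z) + (z-1)) z
              have hmod : ((a+1)*(a+z) + (z-1)) % z < z := Nat.mod_lt _ (by omega)
              have hz1 : z - 1 + 1 = z := by omega
              linarith [hdm, hmod]
            · have hdm := Nat.div_add_mod ((a+1)*(a+z) + (z-1)) z
              have hz1 : z - 1 + 1 = z := by omega
              linarith [hdm, Nat.zero_le (((a+1)*(a+z) + (z-1)) % z)]
          have hBlb : a+2 ≤ B := hB_lb a z B (by omega) hz2 hBl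
          -- tail crossing existence at k+1
          have hsplX : ∏ j ∈ range (k+2), x j = (∏ j ∈ range (k+1), x (j+1)) * x 0 := prod_range_succ' x (k+1)
          have hsplY : ∏ j ∈ range (k+2), (x j - 1) = (∏ j ∈ range (k+1), (x (j+1) - 1)) * (x 0 - 1) :=
            prod_range_succ' (fun j => x j - 1) (k+1)
          have hv1u1 : (a+1)*(a+z) = a*(a+1+z) + z := by ring
          have hcrossk : B * ∏ j ∈ range (k+1), (x (j+1) - 1) ≤ (B-1) * ∏ j ∈ range (k+1), x (j+1) := by
            have hvY : ((a+1)*(a+z)) * ∏ j ∈ range (k+1), (x (j+1) - 1) ≤ (a*(a+1+z)) * ∏ j ∈ range (k+1), x (j+1) := by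
              rw [hsplX, hsplY] at h1
              calc ((a+1)*(a+z)) * ∏ j ∈ range (k+1), (x (j+1) - 1)
                  = ((a+1)*(x 0 - 1)) * ∏ j ∈ range (k+1), (x (j+1) - 1) := by rw [hx0m1]
                _ = (a+1) * ((∏ j ∈ range (k+1), (x (j+1) - 1)) * (x 0 - 1)) := by ring
                _ ≤ a * ((∏ j ∈ range (k+1), x (j+1)) * x 0) := h1
                _ = (a * x 0) * ∏ j ∈ range (k+1), x (j+1) := by ring
                _ = (a*(a+1+z)) * ∏ j ∈ range (k+1), x (j+1) := by rw [hzx]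
            have hBio : B*(a*(a+1+z)) + ((a+1)*(a+z)) ≤ B*((a+1)*(a+z)) := by
              have e : B*((a+1)*(a+z)) = B*(a*(a+1+z)) + B*z := by rw [hv1u1]; ring
              have : (a+1)*(a+z) ≤ B*z := by linarith [hBl]
              omega
            have hBu1 : B*(a*(a+1+z)) ≤ (B-1)*((a+1)*(a+z)) := by
              have e2 : (B-1)*((a+1)*(a+z)) = B*((a+1)*(a+z)) - ((a+1)*(a+z)) := Nat.sub_one_mul B _
              omega
            have hv1pos : 0 < (a+1)*(a+z) := Nat.mul_pos (by omega) (by omega)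
            have hchain : ((a+1)*(a+z))*(B * ∏ j ∈ range (k+1), (x (j+1) - 1)) ≤
                ((a+1)*(a+z))*((B-1) * ∏ j ∈ range (k+1), x (j+1)) := by
              calc ((a+1)*(a+z))*(B * ∏ j ∈ range (k+1), (x (j+1) - 1))
                  = B * (((a+1)*(a+z)) * ∏ j ∈ range (k+1), (x (j+1) - 1)) := by ring
                _ ≤ B * ((a*(a+1+z)) * ∏ j ∈ range (k+1), x (j+1)) := Nat.mul_le_mul_left _ hvY
                _ = (B*(a*(a+1+z))) * ∏ j ∈ range (k+1), x (j+1) := by ring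
                _ ≤ ((B-1)*((a+1)*(a+z))) * ∏ j ∈ range (k+1), x (j+1) :=
                    Nat.mul_le_mul_right _ hBu1
                _ = ((a+1)*(a+z))*((B-1) * ∏ j ∈ range (k+1), x (j+1)) := by ring
            exact Nat.le_of_mul_le_mul_left hchain (by omega)
          -- minimal tail crossing
          have hex2 : ∃ m, 1 ≤ m ∧ B * ∏ j ∈ range m, (x (j+1) - 1) ≤ (B-1) * ∏ j ∈ range m, x (j+1) :=
            ⟨k+1, by omega, hcrossk⟩
          have hfs := Nat.find_spec hex2
          have hfk : Nat.find hex2 ≤ k+1 := Nat.find_min' hex2 ⟨by omega, hcrossk⟩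
          obtain ⟨t, ht⟩ : ∃ t, Nat.find hex2 = t+1 := ⟨Nat.find hex2 - 1, by omega⟩
          rw [ht] at hfs hfk
          obtain ⟨-, hspec⟩ := hfs
          have hpre2' : (B-1) * ∏ j ∈ range t, x (j+1) < B * ∏ j ∈ range t, (x (j+1) - 1) := by
            rcases Nat.eq_zero_or_pos t with h0 | hpos
            · subst h0; simpa using (by omega : B - 1 < B)
            · have hnot := Nat.find_min hex2 (show t < Nat.find hex2 from by omega)
              push_neg at hnot
              exact hnot (by omega)
          have hpreIH := IH (t+1) (by omega) (by omega) (B-1) B (fun j => x (j+1))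
            (by omega) (by omega)
            (fun j hj => hx1 (j+1) (by omega))
            (fun i j hij hj => hmono (i+1) (j+1) (by omega) (by omega))
            (by simpa using hspec) (by simpa using hpre2')
          simp only [Nat.add_sub_cancel] at hpreIH
          rw [show B - 1 + 1 = B from by omega] at hpreIH
          -- roominess
          have htele := tele_lemma x (k+2) hx1 hmono (t+1) (by omega)
          have hY1pos : 1 ≤ ∏ j ∈ range (t+1), (x (j+1) - 1) :=
            one_le_prod_aux _ (t+1) (fun j hj => by have := hx1 (j+1) (by omega); omega)
          have hroom : x 0 ≤ (t+1)*(B-1) := by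
            have hch : (∏ j ∈ range (t+1), (x (j+1) - 1)) * (x 0 * B) ≤
                (∏ j ∈ range (t+1), (x (j+1) - 1)) * ((B-1)*(x 0 + (t+1))) := by
              calc (∏ j ∈ range (t+1), (x (j+1) - 1)) * (x 0 * B)
                  = x 0 * (B * ∏ j ∈ range (t+1), (x (j+1) - 1)) := by ring
                _ ≤ x 0 * ((B-1) * ∏ j ∈ range (t+1), x (j+1)) := Nat.mul_le_mul_left _ hspec
                _ = (B-1) * (x 0 * ∏ j ∈ range (t+1), x (j+1)) := by ring
                _ ≤ (B-1) * ((x 0 + (t+1)) * ∏ j ∈ range (t+1), (x (j+1) - 1)) :=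
                    Nat.mul_le_mul_left _ htele
                _ = (∏ j ∈ range (t+1), (x (j+1) - 1)) * ((B-1)*(x 0 + (t+1))) := by ring
            have hxB : x 0 * B ≤ (B-1)*(x 0 + (t+1)) := Nat.le_of_mul_le_mul_left hch (by omega)
            have e : x 0 * B = x 0 * (B-1) + x 0 := by
              have hB1 : B - 1 + 1 = B := by omega
              calc x 0 * B = x 0 * ((B-1)+1) := by rw [hB1]
                _ = x 0 * (B-1) + x 0 := by ring
            have e2 : (B-1)*(x 0 + (t+1)) = x 0 * (B-1) + (t+1)*(B-1) := by ring
            omega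
          -- NL
          have hNL := nl a z B (x 0) t (by omega) hz2 hzx hBl hBu hroom
          -- multiply prefix conclusion by a * x 0
          have hpreS : (a * x 0) * ((B-1) * ∏ j ∈ range (t+1), x (j+1)) + (a * x 0) * B^(2^t) ≤
              (a * x 0) * B^(2^(t+1)) := by
            calc (a * x 0) * ((B-1) * ∏ j ∈ range (t+1), x (j+1)) + (a * x 0) * B^(2^t)
                = (a * x 0) * ((B-1) * (∏ j ∈ range (t+1), x (j+1)) + B^(2^t)) := by ring
              _ ≤ (a * x 0) * B^(2^(t+1)) := Nat.mul_le_mul_left _ hpreIH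
          have hkey : (B-1) * (a * (x 0 * ∏ j ∈ range (t+1), x (j+1))) + (B-1)*(a+1)^(2^(t+1)) ≤
              (B-1)*(a+1)^(2^(t+2)) := by
            have e3 : (a * x 0) * ((B-1) * ∏ j ∈ range (t+1), x (j+1)) =
                (B-1) * (a * (x 0 * ∏ j ∈ range (t+1), x (j+1))) := by ring
            have e4 : a * x 0 * B^(2^(t+1)) = (a * x 0) * B^(2^(t+1)) := by ring
            have e5 : a * x 0 * B^(2^t) = (a * x 0) * B^(2^t) := by ring
            linarith [hpreS, hNL]
          have hmain : a * (x 0 * ∏ j ∈ range (t+1), x (j+1)) + (a+1)^(2^(t+1)) ≤ (a+1)^(2^(t+2)) := by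
            have := hkey
            have e6 : (B-1) * (a * (x 0 * ∏ j ∈ range (t+1), x (j+1))) + (B-1)*(a+1)^(2^(t+1)) =
                (B-1) * ((a * (x 0 * ∏ j ∈ range (t+1), x (j+1))) + (a+1)^(2^(t+1))) := by ring
            rw [e6] at this
            exact Nat.le_of_mul_le_mul_left this (by omega)
          have eXt : ∏ j ∈ range (t+2), x j = (∏ j ∈ range (t+1), x (j+1)) * x 0 := prod_range_succ' x (t+1)
          have hmain' : a * ∏ j ∈ range (t+2), x j + (a+1)^(2^(t+1)) ≤ (a+1)^(2^(t+2)) := by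
            rw [eXt]
            calc a * ((∏ j ∈ range (t+1), x (j+1)) * x 0) + (a+1)^(2^(t+1))
                = a * (x 0 * ∏ j ∈ range (t+1), x (j+1)) + (a+1)^(2^(t+1)) := by ring
              _ ≤ (a+1)^(2^(t+2)) := hmain
          rcases Nat.eq_or_lt_of_le hfk with hteq | htlt
          · -- t + 1 = k + 1 : done
            have : t = k := by omega
            subst this
            exact hmain'
          · -- t + 1 < k + 1 : tail-tail
            have htk : t + 2 ≤ k + 1 := by omega
            have hu1 : a * ∏ j ∈ range (t+2), x j + 1 ≤ (a+1)^(2^(t+2)) := by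
              have hone : 1 ≤ (a+1)^(2^(t+1)) := Nat.one_le_pow _ _ (by omega)
              omega
            obtain ⟨l, hl⟩ : ∃ l, k+2 = (t+2) + (l+1) := ⟨k+1-(t+2), by omega⟩
            have hml : (t+2) + l = k + 1 := by omega
            have eX2 : ∏ j ∈ range (k+2), x j = (∏ j ∈ range (t+2), x j) * ∏ j ∈ range (l+1), x ((t+2)+j) := by
              rw [hl]; exact Finset.prod_range_add x (t+2) (l+1)
            have eY2 : ∏ j ∈ range (k+2), (x j - 1) = (∏ j ∈ range (t+2), (x j - 1)) * ∏ j ∈ range (l+1), (x ((t+2)+j) - 1) := by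
              rw [hl]; exact Finset.prod_range_add (fun j => x j - 1) (t+2) (l+1)
            have eX1 : ∏ j ∈ range (k+1), x j = (∏ j ∈ range (t+2), x j) * ∏ j ∈ range l, x ((t+2)+j) := by
              rw [show k+1 = (t+2) + l from by omega]; exact Finset.prod_range_add x (t+2) l
            have eY1 : ∏ j ∈ range (k+1), (x j - 1) = (∏ j ∈ range (t+2), (x j - 1)) * ∏ j ∈ range l, (x ((t+2)+j) - 1) := by
              rw [show k+1 = (t+2) + l from by omega]; exact Finset.prod_range_add (fun j => x j - 1) (t+2) l
            have h1'' : ((a+1) * ∏ j ∈ range (t+2), (x j - 1)) * ∏ j ∈ range (l+1), (x ((t+2)+j) - 1) ≤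
                (a * ∏ j ∈ range (t+2), x j) * ∏ j ∈ range (l+1), x ((t+2)+j) := by
              rw [eX2, eY2] at h1
              calc ((a+1) * ∏ j ∈ range (t+2), (x j - 1)) * ∏ j ∈ range (l+1), (x ((t+2)+j) - 1)
                  = (a+1) * ((∏ j ∈ range (t+2), (x j - 1)) * ∏ j ∈ range (l+1), (x ((t+2)+j) - 1)) := by ring
                _ ≤ a * ((∏ j ∈ range (t+2), x j) * ∏ j ∈ range (l+1), x ((t+2)+j)) := h1
                _ = (a * ∏ j ∈ range (t+2), x j) * ∏ j ∈ range (l+1), x ((t+2)+j) := by ring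
            have h2'' : (a * ∏ j ∈ range (t+2), x j) * ∏ j ∈ range l, x ((t+2)+j) <
                ((a+1) * ∏ j ∈ range (t+2), (x j - 1)) * ∏ j ∈ range l, (x ((t+2)+j) - 1) := by
              rw [eX1, eY1] at h2
              calc (a * ∏ j ∈ range (t+2), x j) * ∏ j ∈ range l, x ((t+2)+j)
                  = a * ((∏ j ∈ range (t+2), x j) * ∏ j ∈ range l, x ((t+2)+j)) := by ring
                _ < (a+1) * ((∏ j ∈ range (t+2), (x j - 1)) * ∏ j ∈ range l, (x ((t+2)+j) - 1)) := h2
                _ = ((a+1) * ∏ j ∈ range (t+2), (x j - 1)) * ∏ j ∈ range l, (x ((t+2)+j) - 1) := by ring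
            have hXpos : 1 ≤ ∏ j ∈ range (t+2), x j :=
              one_le_prod_aux x (t+2) (fun j hj => by have := hx1 j (by omega); omega)
            have hYpos : 1 ≤ ∏ j ∈ range (t+2), (x j - 1) :=
              one_le_prod_aux _ (t+2) (fun j hj => by have := hx1 j (by omega); omega)
            have htail := IH (l+1) (by omega) (by omega) (a * ∏ j ∈ range (t+2), x j)
              ((a+1) * ∏ j ∈ range (t+2), (x j - 1)) (fun j => x ((t+2)+j))
              (Nat.mul_pos ha hXpos) (Nat.mul_pos (by omega) hYpos)
              (fun j hj => hx1 ((t+2)+j) (by omega))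
              (fun i j hij hj => hmono ((t+2)+i) ((t+2)+j) (by omega) (by omega))
              h1'' (by simpa using h2'')
            simp only [Nat.add_sub_cancel] at htail
            have hsq : (a * ∏ j ∈ range (t+2), x j + 1)^(2^(l+1)) = ((a * ∏ j ∈ range (t+2), x j + 1)^(2^l))^2 := by
              rw [pow_succ, pow_mul]
            rw [hsq] at htail
            have hlift := lift_lemma ((a * ∏ j ∈ range (t+2), x j) * ∏ j ∈ range (l+1), x ((t+2)+j))
              (a * ∏ j ∈ range (t+2), x j + 1) ((a+1)^(2^(t+2))) (2^l) (by omega) hu1 htail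
            have e1 : ((a+1)^(2^(t+2)))^(2^l) = (a+1)^(2^(k+1)) := by
              rw [pow2_pow, show (t+2)+l = k+1 from hml]
            rw [e1] at hlift
            have e2 : ((a+1)^(2^(k+1)))^2 = (a+1)^(2^(k+2)) := by
              rw [show (2:ℕ)^(k+2) = 2^(k+1)*2 from pow_succ 2 (k+1), pow_mul]
            rw [e2] at hlift
            have eprod : a * ∏ j ∈ range (k+2), x j = (a * ∏ j ∈ range (t+2), x j) * ∏ j ∈ range (l+1), x ((t+2)+j) := by
              rw [eX2]; ring
            rw [eprod]
            exact hlift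




theorem nielsen_lemma (r a b : ℕ) (hr : 0 < r) (ha : 0 < a) (hb : 0 < b)
    (x : ℕ → ℕ) (hx1 : ∀ j < r, 1 < x j)
    (hmono : ∀ i j, i < j → j < r → x i < x j)
    (h1 : ∏ j ∈ Finset.range r, (1 - 1 / (x j : ℚ)) ≤ (a : ℚ) / b)
    (h2 : (a : ℚ) / b < ∏ j ∈ Finset.range (r - 1), (1 - 1 / (x j : ℚ))) :
    a * ∏ j ∈ Finset.range r, x j ≤ (a + 1) ^ (2 ^ r) - (a + 1) ^ (2 ^ (r - 1)) := by
  have key : ∀ m, m ≤ r → (∏ j ∈ Finset.range m, (1 - 1 / (x j : ℚ))) =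
      ((∏ j ∈ Finset.range m, (x j - 1) : ℕ) : ℚ) / ((∏ j ∈ Finset.range m, x j : ℕ) : ℚ) := by
    intro m hm
    have eY : ((∏ j ∈ Finset.range m, (x j - 1) : ℕ) : ℚ) = ∏ j ∈ Finset.range m, ((x j : ℚ) - 1) := by
      rw [Nat.cast_prod]
      apply Finset.prod_congr rfl
      intro j hj
      have h2x : 1 ≤ x j := le_of_lt (hx1 j (lt_of_lt_of_le (Finset.mem_range.mp hj) hm))
      push_cast [Nat.cast_sub h2x]
      ring
    have eX : ((∏ j ∈ Finset.range m, x j : ℕ) : ℚ) = ∏ j ∈ Finset.range m, (x j : ℚ) :=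
      Nat.cast_prod _ _
    rw [eY, eX, ← Finset.prod_div_distrib]
    apply Finset.prod_congr rfl
    intro j hj
    have h2x : 1 < x j := hx1 j (lt_of_lt_of_le (Finset.mem_range.mp hj) hm)
    have hne : (x j : ℚ) ≠ 0 := Nat.cast_ne_zero.mpr (by omega)
    field_simp
  have hPpos : ∀ m, m ≤ r → 0 < (∏ j ∈ Finset.range m, x j : ℕ) := by
    intro m hm
    apply Finset.prod_pos
    intro j hj
    exact lt_trans Nat.zero_lt_one (hx1 j (lt_of_lt_of_le (Finset.mem_range.mp hj) hm))
  have h1n : b * ∏ j ∈ Finset.range r, (x j - 1) ≤ a * ∏ j ∈ Finset.range r, x j := by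
    rw [key r (le_refl r)] at h1
    have hP : (0:ℚ) < ((∏ j ∈ Finset.range r, x j : ℕ) : ℚ) := by exact_mod_cast hPpos r (le_refl r)
    have hbq : (0:ℚ) < (b:ℚ) := by exact_mod_cast hb
    rw [div_le_div_iff₀ hP hbq] at h1
    have : ((b * ∏ j ∈ Finset.range r, (x j - 1) : ℕ) : ℚ) ≤ ((a * ∏ j ∈ Finset.range r, x j : ℕ) : ℚ) := by
      push_cast at h1 ⊢
      linarith [h1]
    exact_mod_cast this
  have h2n : a * ∏ j ∈ Finset.range (r-1), x j < b * ∏ j ∈ Finset.range (r-1), (x j - 1) := by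
    rw [key (r-1) (by omega)] at h2
    have hP : (0:ℚ) < ((∏ j ∈ Finset.range (r-1), x j : ℕ) : ℚ) := by exact_mod_cast hPpos (r-1) (by omega)
    have hbq : (0:ℚ) < (b:ℚ) := by exact_mod_cast hb
    rw [div_lt_div_iff₀ hbq hP] at h2
    have : ((a * ∏ j ∈ Finset.range (r-1), x j : ℕ) : ℚ) < ((b * ∏ j ∈ Finset.range (r-1), (x j - 1) : ℕ) : ℚ) := by
      push_cast at h2 ⊢
      linarith [h2]
    exact_mod_cast this
  have hc := core r hr a b x ha hb (fun j hj => hx1 j hj) hmono h1n h2n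
  omega
end

section
/- Fix a real number L ≥ 1. There are only finitely many pairs (g, n) of positive integers with g ≥ 2 even, ν₂(g) ≤ L, and (g^n - 1)/(g - 1) a composite number whose Euler totient divides (g^n - 1)/(g - 1) - 1. -/
private lemma pow_aux (t s : ℕ) :
    (t + 1) ^ s ≤ t ^ s + s * (t + 1) ^ (s - 1) := by
  induction s with
  | zero => simp
  | succ s ih =>
    have h1 : s * ((t + 1) * (t + 1) ^ (s - 1)) ≤ s * (t + 1) ^ s := by
      cases s with
      | zero => simp
      | succ u =>
        apply Nat.mul_le_mul_left
        simp [pow_succ, Nat.mul_comm]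
    have h3 : t ^ s ≤ (t + 1) ^ s := Nat.pow_le_pow_left (by omega) s
    calc (t + 1) ^ (s + 1) = (t + 1) * (t + 1) ^ s := by ring
      _ ≤ (t + 1) * (t ^ s + s * (t + 1) ^ (s - 1)) := Nat.mul_le_mul_left _ ih
      _ = (t ^ (s+1) + t ^ s) + s * ((t + 1) * (t + 1) ^ (s - 1)) := by ring
      _ ≤ (t ^ (s+1) + (t+1) ^ s) + s * (t + 1) ^ s := by
          exact Nat.add_le_add (Nat.add_le_add_left h3 _) h1
      _ = t ^ (s + 1) + (s + 1) * (t + 1) ^ (s + 1 - 1) := by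
          simp; ring

private lemma pow_aux' (q s : ℕ) (hq : 1 ≤ q) :
    q ^ s ≤ (q - 1) ^ s + s * q ^ (s - 1) := by
  obtain ⟨t, rfl⟩ : ∃ t, q = t + 1 := ⟨q - 1, by omega⟩
  simpa using pow_aux t s

private lemma key_step (d r : ℕ) (hd : 2 ≤ d) (F T : Finset ℕ) (hTF : T ⊆ F)
    (hr : F.card ≤ r) (hF3 : ∀ p ∈ F, 3 ≤ p)
    (q : ℕ) (hqF : q ∈ F) (hqT : q ∉ T)
    (hmin : ∀ p ∈ F, p ∉ T → q ≤ p)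
    (heq : (∏ p ∈ F, p) = d * (∏ p ∈ F, (p - 1)) + 1) :
    q ≤ d * r * ∏ p ∈ T, p := by
  classical
  set S := F \ T with hS
  set A := ∏ p ∈ T, p with hA
  set B := ∏ p ∈ T, (p - 1) with hB
  set x := ∏ p ∈ S, p with hx
  set y := ∏ p ∈ S, (p - 1) with hy
  set s := S.card with hs
  have hqS : q ∈ S := Finset.mem_sdiff.mpr ⟨hqF, hqT⟩
  have hSne : S.Nonempty := ⟨q, hqS⟩
  have hs1 : 1 ≤ s := Finset.card_pos.mpr hSne
  have hq3 : 3 ≤ q := hF3 q hqF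
  have hS3 : ∀ p ∈ S, 3 ≤ p := fun p hp => hF3 p (Finset.mem_sdiff.mp hp).1
  have hxA : x * A = ∏ p ∈ F, p := Finset.prod_sdiff hTF
  have hyB : y * B = ∏ p ∈ F, (p - 1) := Finset.prod_sdiff hTF
  have hApos : 0 < A := Finset.prod_pos (fun p hp => by have := hF3 p (hTF hp); omega)
  have hBpos : 0 < B := Finset.prod_pos (fun p hp => by have := hF3 p (hTF hp); omega)
  have hxpos : 0 < x := Finset.prod_pos (fun p hp => by have := hS3 p hp; omega)
  have hypos : 0 < y := Finset.prod_pos (fun p hp => by have := hS3 p hp; omega)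
  have hyx : y < x := by
    apply Finset.prod_lt_prod_of_nonempty (fun p hp => by have := hS3 p hp; omega)
      (fun p hp => by have := hS3 p hp; omega) hSne
  have hAx : A * x = d * (B * y) + 1 := by
    have hby : B * y = y * B := Nat.mul_comm _ _
    rw [hby, hyB, Nat.mul_comm A x, hxA]; exact heq
  have hAdB : A + 1 ≤ d * B := by
    by_contra hcon
    push_neg at hcon
    have hdB2 : 2 ≤ d * B := le_trans hd (Nat.le_mul_of_pos_right d hBpos)
    have hAge : d * B ≤ A := by omega
    have h1 : d * B * x ≤ A * x := Nat.mul_le_mul_right x hAge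
    have h2 : d * B * (y + 1) ≤ d * B * x := Nat.mul_le_mul_left _ (by omega)
    nlinarith [hAx]
  -- (q-1)^s * x ≤ q^s * y
  have h5 : (q - 1) ^ s * x ≤ q ^ s * y := by
    have hmain := Finset.prod_le_prod (s := S) (f := fun p => (q - 1) * p)
      (g := fun p => q * (p - 1)) (fun p hp => Nat.zero_le _)
      (fun p hp => by
        have h1 := hS3 p hp
        have h2 := hmin p (Finset.mem_sdiff.mp hp).1 (Finset.mem_sdiff.mp hp).2
        show (q - 1) * p ≤ q * (p - 1)
        obtain ⟨a, rfl⟩ : ∃ a, q = a + 1 := ⟨q - 1, by omega⟩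
        obtain ⟨b, rfl⟩ : ∃ b, p = b + 1 := ⟨p - 1, by omega⟩
        simp only [Nat.add_sub_cancel]
        nlinarith)
    have l1 : ∏ p ∈ S, ((q - 1) * p) = (q - 1) ^ s * x := by
      rw [Finset.prod_mul_distrib, Finset.prod_const]
    have l2 : ∏ p ∈ S, (q * (p - 1)) = q ^ s * y := by
      rw [Finset.prod_mul_distrib, Finset.prod_const]
    rw [l1, l2] at hmain
    exact hmain
  have hbin := pow_aux' q s (by omega)
  have h6 : q ^ s * x ≤ q ^ s * y + s * q ^ (s - 1) * x := by
    calc q ^ s * x ≤ ((q - 1) ^ s + s * q ^ (s - 1)) * x := Nat.mul_le_mul_right x hbin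
      _ = (q - 1) ^ s * x + s * q ^ (s - 1) * x := by ring
      _ ≤ q ^ s * y + s * q ^ (s - 1) * x := Nat.add_le_add_right h5 _
  have h7 : d * B * (q ^ s * x) + q ^ s ≤ A * (q ^ s * x) + d * B * (s * q ^ (s - 1) * x) := by
    calc d * B * (q ^ s * x) + q ^ s
        ≤ d * B * (q ^ s * y + s * q ^ (s - 1) * x) + q ^ s :=
          Nat.add_le_add_right (Nat.mul_le_mul_left _ h6) _
      _ = q ^ s * (d * (B * y) + 1) + d * B * (s * q ^ (s - 1) * x) := by ring
      _ = q ^ s * (A * x) + d * B * (s * q ^ (s - 1) * x) := by rw [hAx]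
      _ = A * (q ^ s * x) + d * B * (s * q ^ (s - 1) * x) := by ring
  have hA1' : A * (q ^ s * x) + q ^ s * x ≤ d * B * (q ^ s * x) := by
    calc A * (q ^ s * x) + q ^ s * x = (A + 1) * (q ^ s * x) := by ring
      _ ≤ d * B * (q ^ s * x) := Nat.mul_le_mul_right _ hAdB
  have h8 : q ^ s * x ≤ d * B * (s * q ^ (s - 1) * x) := by
    have c1 : A * (q ^ s * x) + (q ^ s * x + q ^ s)
        ≤ A * (q ^ s * x) + d * B * (s * q ^ (s - 1) * x) := by
      calc A * (q ^ s * x) + (q ^ s * x + q ^ s)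
          = (A * (q ^ s * x) + q ^ s * x) + q ^ s := by ring
        _ ≤ d * B * (q ^ s * x) + q ^ s := Nat.add_le_add_right hA1' _
        _ ≤ A * (q ^ s * x) + d * B * (s * q ^ (s - 1) * x) := h7
    have c2 := Nat.le_of_add_le_add_left c1
    omega
  have hqs : q ^ s = q * q ^ (s - 1) := by
    conv_lhs => rw [show s = s - 1 + 1 from by omega]
    rw [pow_succ]; ring
  have h9 : q * (q ^ (s - 1) * x) ≤ d * B * s * (q ^ (s - 1) * x) := by
    calc q * (q ^ (s - 1) * x) = q ^ s * x := by rw [hqs]; ring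
      _ ≤ d * B * (s * q ^ (s - 1) * x) := h8
      _ = d * B * s * (q ^ (s - 1) * x) := by ring
  have hq_le : q ≤ d * B * s := by
    have hqpos : 0 < q ^ (s - 1) * x := Nat.mul_pos (pow_pos (by omega) _) hxpos
    refine Nat.le_of_mul_le_mul_right ?_ hqpos
    calc q * (q ^ (s-1) * x) ≤ d * B * s * (q ^ (s-1) * x) := h9
      _ = d * B * s * (q ^ (s-1) * x) := rfl
  have hBA : B ≤ A := Finset.prod_le_prod (fun p hp => Nat.zero_le _)
      (fun p hp => Nat.sub_le p 1)
  have hsr : s ≤ r := le_trans (Finset.card_le_card (Finset.sdiff_subset)) hr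
  calc q ≤ d * B * s := hq_le
    _ ≤ d * A * r := Nat.mul_le_mul (Nat.mul_le_mul_left d hBA) hsr
    _ = d * r * A := by ring

private lemma lehmer_squarefree (m : ℕ) (hm : 1 < m) (hdvd : m.totient ∣ m - 1) :
    Squarefree m := by
  rw [Nat.squarefree_iff_prime_squarefree]
  intro p hp hpp
  have h1 : (p * p).totient ∣ m.totient := Nat.totient_dvd_of_dvd hpp
  have h2 : (p * p).totient = p * (p - 1) := by
    have : p * p = p ^ 2 := by ring
    rw [this, Nat.totient_prime_pow hp (by norm_num)]
    simp
  have h3 : p ∣ m - 1 := dvd_trans (h2 ▸ Dvd.intro _ rfl : p ∣ (p*p).totient)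
      (dvd_trans h1 hdvd)
  have h4 : p ∣ m := dvd_trans (Dvd.intro _ rfl) hpp
  have h5 : p ∣ m - (m - 1) := Nat.dvd_sub h4 h3
  have h6 : m - (m - 1) = 1 := by omega
  rw [h6] at h5
  exact Nat.Prime.one_lt hp |>.ne' (Nat.dvd_one.mp h5)

private lemma lehmer_bound (m : ℕ) (hm : 1 < m) (hodd : Odd m) (hnp : ¬ m.Prime)
    (hdvd : m.totient ∣ m - 1) :
    m ≤ (3 ^ m.primeFactors.card * m.primeFactors.card) ^ (2 ^ m.primeFactors.card) := by
  classical
  have hsq : Squarefree m := lehmer_squarefree m hm hdvd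
  set F := m.primeFactors with hF
  set r := F.card with hr
  have hF3 : ∀ p ∈ F, 3 ≤ p := by
    intro p hp
    have hpr : p.Prime := Nat.prime_of_mem_primeFactors hp
    have hpd : p ∣ m := Nat.dvd_of_mem_primeFactors hp
    have : p ≠ 2 := by
      rintro rfl
      rw [Nat.odd_iff] at hodd
      obtain ⟨c, rfl⟩ := hpd
      omega
    have := hpr.two_le
    omega
  have hmF : ∏ p ∈ F, p = m := Nat.prod_primeFactors_of_squarefree hsq
  have hmpos : 0 < m := by omega
  have hφ : m.totient = ∏ p ∈ F, (p - 1) := by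
    have := Nat.totient_mul_prod_primeFactors m
    rw [hmF] at this
    exact Nat.eq_of_mul_eq_mul_right hmpos (by rw [this, Nat.mul_comm])
  have hφpos : 0 < m.totient := Nat.totient_pos.mpr hmpos
  obtain ⟨d, hdφ⟩ : ∃ d, d * m.totient = m - 1 :=
    ⟨(m - 1) / m.totient, Nat.div_mul_cancel hdvd⟩
  have hd2 : 2 ≤ d := by
    have hne : m.totient ≠ m - 1 := fun h => hnp ((Nat.totient_eq_iff_prime hmpos).mp h)
    have hlt : m.totient < m := Nat.totient_lt m hm
    have : d ≠ 0 := by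
      intro h
      rw [h] at hdφ
      omega
    have : d ≠ 1 := by
      intro h
      rw [h] at hdφ
      omega
    omega
  have heq : (∏ p ∈ F, p) = d * (∏ p ∈ F, (p - 1)) + 1 := by
    rw [hmF, ← hφ, hdφ]
    omega
  have hr1 : 1 ≤ r := Finset.card_pos.mpr (Nat.nonempty_primeFactors.mpr hm)
  have hd3 : d ≤ 3 ^ r := by
    have hprod : 2 ^ r * m ≤ 3 ^ r * m.totient := by
      have := Finset.prod_le_prod (s := F) (f := fun p => 2 * p) (g := fun p => 3 * (p - 1))
        (fun p hp => Nat.zero_le _)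
        (fun p hp => by have := hF3 p hp; show 2 * p ≤ 3 * (p - 1); omega)
      rw [Finset.prod_mul_distrib, Finset.prod_mul_distrib, Finset.prod_const,
        Finset.prod_const, hmF, ← hφ] at this
      exact this
    have h1 : 2 ^ r * (d * m.totient) < 2 ^ r * m := by
      exact mul_lt_mul_of_pos_left (by omega) (pow_pos (by norm_num) r)
    have h2 : d * 2 ^ r * m.totient < 3 ^ r * m.totient := by
      calc d * 2 ^ r * m.totient = 2 ^ r * (d * m.totient) := by ring
        _ < 2 ^ r * m := h1
        _ ≤ 3 ^ r * m.totient := hprod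
    have h3 : d * 2 ^ r < 3 ^ r := Nat.lt_of_mul_lt_mul_right h2
    calc d ≤ d * 2 ^ r := Nat.le_mul_of_pos_right d (pow_pos (by norm_num) r)
      _ ≤ 3 ^ r := h3.le
  set K := d * r with hK
  have claim : ∀ c : ℕ, ∀ T ⊆ F, T.card = c →
      (∀ p ∈ T, ∀ q ∈ F, q ∉ T → p < q) →
      ∏ p ∈ T, p ≤ K ^ (2 ^ c - 1) := by
    intro c
    induction c with
    | zero =>
      intro T hT hc _
      rw [Finset.card_eq_zero.mp hc]
      simp
    | succ c ih =>
      intro T hT hc hdc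
      have hne : T.Nonempty := Finset.card_pos.mp (by omega)
      set q := T.max' hne with hqdef
      have hqT : q ∈ T := T.max'_mem hne
      have hT' : T.erase q ⊆ F := (Finset.erase_subset _ _).trans hT
      have hc' : (T.erase q).card = c := by rw [Finset.card_erase_of_mem hqT]; omega
      have hdc' : ∀ p ∈ T.erase q, ∀ q' ∈ F, q' ∉ T.erase q → p < q' := by
        intro p hp q' hq' hq'n
        by_cases hq'q : q' = q
        · subst hq'q
          exact lt_of_le_of_ne (T.le_max' p (Finset.mem_of_mem_erase hp))
            (Finset.ne_of_mem_erase hp)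
        · have hq'T : q' ∉ T := fun h => hq'n (Finset.mem_erase.mpr ⟨hq'q, h⟩)
          exact hdc p (Finset.mem_of_mem_erase hp) q' hq' hq'T
      have hA' := ih (T.erase q) hT' hc' hdc'
      have hmin : ∀ p ∈ F, p ∉ T.erase q → q ≤ p := by
        intro p hp hpn
        by_cases hpq : p = q
        · omega
        · have hpT : p ∉ T := fun h => hpn (Finset.mem_erase.mpr ⟨hpq, h⟩)
          exact (hdc q hqT p hp hpT).le
      have hkey := key_step d r hd2 F (T.erase q) hT' (le_refl _) hF3 q (hT hqT)
        (Finset.notMem_erase q T) hmin heq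
      have hexp : 1 + (2 ^ c - 1) + (2 ^ c - 1) = 2 ^ (c + 1) - 1 := by
        have : 1 ≤ 2 ^ c := Nat.one_le_two_pow
        rw [pow_succ]
        omega
      calc ∏ p ∈ T, p = q * ∏ p ∈ T.erase q, p := (Finset.mul_prod_erase T _ hqT).symm
        _ ≤ (K * ∏ p ∈ T.erase q, p) * ∏ p ∈ T.erase q, p := by
            exact Nat.mul_le_mul_right _ hkey
        _ ≤ (K * K ^ (2 ^ c - 1)) * K ^ (2 ^ c - 1) := by
            exact Nat.mul_le_mul (Nat.mul_le_mul_left K hA') hA'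
        _ = K ^ (1 + (2 ^ c - 1) + (2 ^ c - 1)) := by
            rw [pow_add, pow_add, pow_one]
        _ = K ^ (2 ^ (c + 1) - 1) := by rw [hexp]
  have hfinal := claim r F (le_refl _) rfl (fun p hp q hq hqn => absurd hq hqn)
  rw [hmF] at hfinal
  have hKle : K ≤ 3 ^ r * r := Nat.mul_le_mul_right r hd3
  calc m ≤ K ^ (2 ^ r - 1) := hfinal
    _ ≤ (3 ^ r * r) ^ (2 ^ r - 1) := Nat.pow_le_pow_left hKle _
    _ ≤ (3 ^ r * r) ^ (2 ^ r) :=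
        Nat.pow_le_pow_right (Nat.mul_pos (pow_pos (by norm_num) r) hr1)
          (Nat.sub_le _ _)

theorem repunit_even_lehmer_finite (L : ℝ) (hL : 1 ≤ L) :
    Set.Finite {p : ℕ × ℕ | 2 ≤ p.1 ∧ Even p.1 ∧ (padicValNat 2 p.1 : ℝ) ≤ L ∧
      0 < p.2 ∧ 1 < (p.1 ^ p.2 - 1) / (p.1 - 1) ∧
      ¬ ((p.1 ^ p.2 - 1) / (p.1 - 1)).Prime ∧
      ((p.1 ^ p.2 - 1) / (p.1 - 1)).totient ∣ (p.1 ^ p.2 - 1) / (p.1 - 1) - 1} := by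
  classical
  set k := ⌊L⌋₊ with hk
  have hk1 : 1 ≤ k := Nat.le_floor (by exact_mod_cast hL)
  set C := (3 ^ k * k) ^ (2 ^ k) with hC
  apply Set.Finite.subset (Set.finite_Icc ((0, 0) : ℕ × ℕ) (C, C))
  rintro ⟨g, n⟩ hp
  obtain ⟨hg2, hge, hval, hn, hm1, hnp, hdvd⟩ := hp
  simp only at hg2 hge hval hn hm1 hnp hdvd
  set m := (g ^ n - 1) / (g - 1) with hm
  set m' := (g ^ (n - 1) - 1) / (g - 1) with hm'
  have hdvd1 : (g - 1) ∣ g ^ n - 1 := by simpa using Nat.sub_dvd_pow_sub_pow g 1 n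
  have hdvd1' : (g - 1) ∣ g ^ (n - 1) - 1 := by simpa using Nat.sub_dvd_pow_sub_pow g 1 (n - 1)
  have hmeq : m * (g - 1) = g ^ n - 1 := Nat.div_mul_cancel hdvd1
  have hm'eq : m' * (g - 1) = g ^ (n - 1) - 1 := Nat.div_mul_cancel hdvd1'
  have hgn : g ≤ g ^ n := Nat.le_self_pow (by omega) g
  have hgn2 : 2 ≤ g ^ n := le_trans hg2 hgn
  have hgnodd : Odd (g ^ n - 1) := by
    have he : Even (g ^ n) := (Nat.even_pow).mpr ⟨hge, by omega⟩
    exact Nat.Even.sub_odd (by omega) he odd_one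
  have hodd_m : Odd m := by
    have : Odd (m * (g - 1)) := hmeq ▸ hgnodd
    exact (Nat.odd_mul.mp this).1
  -- m = 1 + g * m'
  have e0 : g * g ^ (n - 1) = g ^ n := by
    conv_rhs => rw [show n = n - 1 + 1 from by omega]
    rw [pow_succ]; ring
  have e1 : g * (g ^ (n - 1) - 1) = g ^ n - g := by
    rw [Nat.mul_sub, mul_one, e0]
  have key1 : (1 + g * m') * (g - 1) = g ^ n - 1 := by
    have h1 : (1 + g * m') * (g - 1) = (g - 1) + g * (m' * (g - 1)) := by ring
    rw [h1, hm'eq, e1]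
    omega
  have hm1' : m = 1 + g * m' :=
    Nat.eq_of_mul_eq_mul_right (show 0 < g - 1 by omega) (by rw [hmeq, key1])
  have hm'pos : 0 < m' := by
    rcases Nat.eq_zero_or_pos m' with h | h
    · rw [h, Nat.mul_zero] at hm1'
      omega
    · exact h
  have hn2 : 2 ≤ n := by
    by_contra hcon
    have hn1 : n = 1 := by omega
    rw [hn1] at hm'eq
    simp at hm'eq
    omega
  have hm'odd : Odd m' := by
    have hgn1odd : Odd (g ^ (n - 1) - 1) := by
      have he : Even (g ^ (n - 1)) := (Nat.even_pow).mpr ⟨hge, by omega⟩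
      have : 2 ≤ g ^ (n - 1) := le_trans hg2 (Nat.le_self_pow (by omega) g)
      exact Nat.Even.sub_odd (by omega) he odd_one
    have : Odd (m' * (g - 1)) := hm'eq ▸ hgn1odd
    exact (Nat.odd_mul.mp this).1
  -- squarefree and totient product
  have hsq : Squarefree m := lehmer_squarefree m hm1 hdvd
  set F := m.primeFactors with hF
  set ω := F.card with hω
  have hmF : ∏ p ∈ F, p = m := Nat.prod_primeFactors_of_squarefree hsq
  have hφ : m.totient = ∏ p ∈ F, (p - 1) := by
    have h := Nat.totient_mul_prod_primeFactors m
    rw [hmF] at h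
    exact Nat.eq_of_mul_eq_mul_right (show 0 < m by omega) (by rw [h, Nat.mul_comm])
  have h2pow : 2 ^ ω ∣ m.totient := by
    rw [hφ]
    have : ∏ p ∈ F, 2 ∣ ∏ p ∈ F, (p - 1) := by
      apply Finset.prod_dvd_prod_of_dvd
      intro p hp
      have hpr : p.Prime := Nat.prime_of_mem_primeFactors hp
      have hpd : p ∣ m := Nat.dvd_of_mem_primeFactors hp
      have hp2 : p ≠ 2 := by
        rintro rfl
        rw [Nat.odd_iff] at hodd_m
        omega
      have := hpr.two_le
      have hpodd : p % 2 = 1 := Nat.odd_iff.mp (hpr.odd_of_ne_two hp2)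
      omega
    rwa [Finset.prod_const] at this
  have hm1g : m - 1 = g * m' := by omega
  have h2dvd : 2 ^ ω ∣ g * m' := hm1g ▸ dvd_trans h2pow hdvd
  have hcop : Nat.Coprime (2 ^ ω) m' :=
    Nat.Coprime.pow_left _ (Nat.coprime_two_left.mpr hm'odd)
  have h2g : 2 ^ ω ∣ g := hcop.dvd_of_dvd_mul_right h2dvd
  have hωval : ω ≤ padicValNat 2 g := by
    have h := (Nat.Prime.pow_dvd_iff_le_factorization Nat.prime_two
      (show g ≠ 0 by omega)).mp h2g
    rwa [Nat.factorization_def g Nat.prime_two] at h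
  have hvk : padicValNat 2 g ≤ k := Nat.le_floor hval
  have hωk : ω ≤ k := le_trans hωval hvk
  -- apply the Lehmer bound
  have hb : m ≤ (3 ^ ω * ω) ^ (2 ^ ω) := lehmer_bound m hm1 hodd_m hnp hdvd
  have hbase : 3 ^ ω * ω ≤ 3 ^ k * k :=
    Nat.mul_le_mul (Nat.pow_le_pow_right (by norm_num) hωk) hωk
  have hmC : m ≤ C := by
    calc m ≤ (3 ^ ω * ω) ^ (2 ^ ω) := hb
      _ ≤ (3 ^ k * k) ^ (2 ^ ω) := Nat.pow_le_pow_left hbase _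
      _ ≤ (3 ^ k * k) ^ (2 ^ k) := by
          apply Nat.pow_le_pow_right
          · have : 0 < 3 ^ k := pow_pos (by norm_num) k
            exact Nat.mul_pos this (by omega)
          · exact Nat.pow_le_pow_right (by norm_num) hωk
  -- bound g and n
  have hgC : g ≤ C := by
    have : g * 1 ≤ g * m' := Nat.mul_le_mul_left g hm'pos
    omega
  have hnC : n ≤ C := by
    have hp1 : 0 < g ^ (n - 1) := pow_pos (by omega) _
    have hle : g ^ (n - 1) * (g - 1) ≤ m * (g - 1) := by
      rw [hmeq, Nat.mul_sub, mul_one, Nat.mul_comm, e0]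
      omega
    have hgm : g ^ (n - 1) ≤ m := Nat.le_of_mul_le_mul_right hle (by omega)
    have h2g' : 2 ^ (n - 1) ≤ g ^ (n - 1) := Nat.pow_le_pow_left hg2 _
    have hlt : n - 1 < 2 ^ (n - 1) := Nat.lt_two_pow_self
    omega
  simp only [Set.mem_Icc, Prod.mk_le_mk]
  exact ⟨⟨Nat.zero_le _, Nat.zero_le _⟩, hgC, hnC⟩
end

section
/- Let g be an odd integer with g > 1 and n ≥ 2, and set b = (g^n - 1)/(g - 1). Suppose b is composite with φ(b) dividing b - 1, and let K be the number of distinct prime divisors of b. Then K ≤ ν₂(g + 1) + ν₂(n - 1) - 1. -/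
theorem repunit_odd_factor_bound (g n : ℕ) (hodd : Odd g) (h1 : 1 < g) (hn : 2 ≤ n)
    (hcomp : ¬ ((g ^ n - 1) / (g - 1)).Prime) (hb1 : 1 < (g ^ n - 1) / (g - 1))
    (hdvd : ((g ^ n - 1) / (g - 1)).totient ∣ (g ^ n - 1) / (g - 1) - 1) :
    ((g ^ n - 1) / (g - 1)).primeFactors.card ≤
      padicValNat 2 (g + 1) + padicValNat 2 (n - 1) - 1 := by
  have hgodd : g % 2 = 1 := Nat.odd_iff.mp hodd
  set b := (g ^ n - 1) / (g - 1) with hb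
  have hg1 : 1 ≤ g := h1.le
  have hgp : 1 ≤ g ^ n := Nat.one_le_pow _ _ (by omega)
  have hgp' : 1 ≤ g ^ (n - 1) := Nat.one_le_pow _ _ (by omega)
  -- geometric sum formula
  have hsum : (g - 1) * ∑ i ∈ Finset.range n, g ^ i = g ^ n - 1 := by
    zify [hg1, hgp]
    rw [mul_comm]
    exact geom_sum_mul (g : ℤ) n
  have hbsum : b = ∑ i ∈ Finset.range n, g ^ i := by
    rw [hb, ← hsum, Nat.mul_div_cancel_left _ (by omega)]
  have hb0 : b ≠ 0 := by omega
  -- b > 2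
  have hb2 : 2 < b := by
    rcases Nat.lt_or_ge b 3 with h | h
    · have : b = 2 := by omega
      exact absurd (this ▸ Nat.prime_two) hcomp
    · omega
  -- b is odd
  have hphi_even : Even b.totient := Nat.totient_even hb2
  have h2b1 : (2 : ℕ) ∣ b - 1 := dvd_trans (even_iff_two_dvd.mp hphi_even) hdvd
  have hbodd : b % 2 = 1 := by omega
  -- n is odd
  have hnodd : n % 2 = 1 := by
    have hmod : b % 2 = n % 2 := by
      rw [hbsum, Finset.sum_nat_mod,
        Finset.sum_congr rfl (fun i _ => Nat.odd_iff.mp (hodd.pow) : ∀ i ∈ Finset.range n, g ^ i % 2 = 1)]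
      simp
    omega
  -- LTE
  have hne : n - 1 ≠ 0 := by omega
  have heven : Even (n - 1) := by rw [Nat.even_iff]; omega
  have hg2 : ¬ (2 : ℕ) ∣ g := by omega
  have hlte := padicValNat.pow_two_sub_pow (x := g) (y := 1) (by omega) (by omega) hg2 hne heven
  simp only [one_pow] at hlte
  -- key identity (g-1)*(b-1) = g*(g^(n-1)-1)
  have key : (g - 1) * (b - 1) = g * (g ^ (n - 1) - 1) := by
    have h1' : (g - 1) * b = g ^ n - 1 := by rw [hbsum]; exact hsum
    have hgn : g ^ n = g * g ^ (n - 1) := by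
      rw [← pow_succ']; congr 1; omega
    zify [hg1, hgp, hgp', hb1.le] at h1' ⊢
    have hgnZ : (g : ℤ) ^ n = g * g ^ (n - 1) := by exact_mod_cast congrArg (Nat.cast : ℕ → ℤ) hgn
    rw [hgnZ] at h1'
    linear_combination h1'
  have hgp2 : 1 < g ^ (n - 1) := Nat.one_lt_pow hne h1
  have hvg : padicValNat 2 g = 0 := padicValNat.eq_zero_of_not_dvd hg2
  have hval : padicValNat 2 (g - 1) + padicValNat 2 (b - 1)
      = padicValNat 2 g + padicValNat 2 (g ^ (n - 1) - 1) := by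
    rw [← padicValNat.mul (by omega) (by omega), ← padicValNat.mul (by omega) (by omega), key]
  have hval2 : padicValNat 2 (b - 1) = padicValNat 2 (g + 1) + padicValNat 2 (n - 1) - 1 := by
    omega
  rw [← hval2]
  -- 2 ^ K divides totient
  have hpow : 2 ^ b.primeFactors.card ∣ b.totient := by
    rw [Nat.totient_eq_prod_factorization hb0, Finsupp.prod, Nat.support_factorization,
      ← Finset.prod_const]
    apply Finset.prod_dvd_prod_of_dvd
    intro p hp
    have hpp := Nat.prime_of_mem_primeFactors hp
    have hpdvd := Nat.dvd_of_mem_primeFactors hp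
    have hp2 : p ≠ 2 := by
      intro h; subst h; omega
    have : (2 : ℕ) ∣ p - 1 := by
      have := hpp.two_le
      have hpodd : p % 2 = 1 := Nat.odd_iff.mp (hpp.odd_of_ne_two hp2)
      omega
    exact dvd_mul_of_dvd_right this _
  have hdvd2 : 2 ^ b.primeFactors.card ∣ b - 1 := hpow.trans hdvd
  have := (Nat.Prime.pow_dvd_iff_le_factorization Nat.prime_two (by omega : b - 1 ≠ 0)).mp hdvd2
  rwa [Nat.factorization_def _ Nat.prime_two] at this
end
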